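/- arXiv:1606.00099 — 8 statements merged into one kernel-verified Lean document; each statement's English description precedes it below -/
import Mathlib

section
/- If g is analytic on the open unit disk U with g(0)=0, g'(0)=1, and g is starlike of order 1/2 (i.e. Re(z g'(z)/g(z)) > 1/2 for all z in U, z ≠ 0), then the function h(z) = -g(z)g(-z)/z (extended by h(0)=0) is analytic on U and starlike, i.e. Re(z h'(z)/h(z)) > 0 for all nonzero z in U. -/
open Complex MeasureTheory

noncomputable section

def unitDisk : Set ℂ := Metric.ball 0 1

def Normalized (f : ℂ → ℂ) : Prop := f 0 = 0 ∧ deriv f 0 = 1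

def StarlikeOfOrder (a : ℝ) (g : ℂ → ℂ) : Prop :=
  ∀ z ∈ unitDisk, z ≠ 0 → a < (z * deriv g z / g z).re

def Starlike (g : ℂ → ℂ) : Prop := StarlikeOfOrder 0 g

def CloseToConvex (f : ℂ → ℂ) : Prop :=
  AnalyticOn ℂ f unitDisk ∧ Normalized f ∧
  ∃ g : ℂ → ℂ, AnalyticOn ℂ g unitDisk ∧ Normalized g ∧ Set.InjOn g unitDisk ∧
    Starlike g ∧ ∀ z ∈ unitDisk, z ≠ 0 → 0 < (z * deriv f z / g z).re

def Subordinate (f g : ℂ → ℂ) : Prop :=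
  ∃ w : ℂ → ℂ, AnalyticOn ℂ w unitDisk ∧ w 0 = 0 ∧
    (∀ z ∈ unitDisk, w z ∈ unitDisk) ∧ ∀ z ∈ unitDisk, f z = g (w z)

def eps (k : ℕ) : ℂ := Complex.exp (2 * Real.pi * Complex.I / k)

def gk (k : ℕ) (g : ℂ → ℂ) (z : ℂ) : ℂ :=
  ∏ v ∈ Finset.range k, (eps k) ^ (-(v : ℤ)) * g ((eps k) ^ v * z)

def Ks (k : ℕ) (l m : ℝ) (φ : ℂ → ℂ) (f : ℂ → ℂ) : Prop :=
  ∃ g : ℂ → ℂ, AnalyticOn ℂ g unitDisk ∧ Normalized g ∧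
    StarlikeOfOrder ((k - 1 : ℝ) / k) g ∧
    Subordinate (fun z => (z ^ k * deriv f z
      + z ^ (k + 1) * iteratedDeriv 2 f z * ((l : ℂ) - m + 2 * l * m)
      + (l : ℂ) * m * z ^ (k + 2) * iteratedDeriv 3 f z) / gk k g z) φ

theorem stmt0 (g : ℂ → ℂ) (hg : AnalyticOn ℂ g unitDisk) (hn : Normalized g)
    (hs : StarlikeOfOrder (1 / 2) g) :
    AnalyticOn ℂ (fun z => if z = 0 then 0 else -(g z * g (-z)) / z) unitDisk ∧
    Starlike (fun z => if z = 0 then 0 else -(g z * g (-z)) / z) := by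
  have hopen : IsOpen unitDisk := Metric.isOpen_ball
  rw [hopen.analyticOn_iff_analyticOnNhd] at hg
  have hneg : ∀ z : ℂ, z ∈ unitDisk → -z ∈ unitDisk := by
    intro z hz
    simpa [unitDisk, Metric.mem_ball, Complex.norm_def] using hz
  have hne : ∀ z ∈ unitDisk, z ≠ 0 → g z ≠ 0 := by
    intro z hz hz0 h0
    have := hs z hz hz0
    rw [h0, div_zero] at this
    simp at this
    norm_num at this
  set h : ℂ → ℂ := fun z => if z = 0 then 0 else -(g z * g (-z)) / z with hh
  constructor
  · rw [hopen.analyticOn_iff_analyticOnNhd]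
    have heq : h = fun z => dslope g 0 z * (-(g (-z))) := by
      funext z
      by_cases hz : z = 0
      · simp [hh, hz, hn.1]
      · have : dslope g 0 z = g z / z := by
          rw [dslope_of_ne _ hz, slope_def_field, hn.1, sub_zero, sub_zero]
        simp only [hh, if_neg hz, this]
        field_simp
    rw [heq]
    intro z hz
    have h2 : AnalyticAt ℂ (fun w => -(g (-w))) z := by
      exact ((hg (-z) (hneg z hz)).comp (analyticAt_id.neg)).neg
    refine AnalyticAt.mul ?_ h2
    by_cases hz0 : z = 0
    · subst hz0
      obtain ⟨p, hp⟩ := hg 0 hz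
      exact ⟨p.fslope, hp.has_fpower_series_dslope_fslope⟩
    · have h1 : AnalyticAt ℂ (fun w => g w / w) z :=
        (hg z hz).div analyticAt_id hz0
      apply h1.congr
      filter_upwards [isOpen_compl_singleton.mem_nhds hz0] with w hw
      have hw' : w ≠ 0 := hw
      rw [dslope_of_ne _ hw', slope_def_field, hn.1, sub_zero, sub_zero]
  · intro z hz hz0
    have hzd : z ∈ unitDisk := hz
    have hnz : -z ∈ unitDisk := hneg z hz
    have hnz0 : -z ≠ 0 := neg_ne_zero.mpr hz0
    have ha := hs z hz hz0
    have hb := hs (-z) hnz hnz0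
    have hAne := hne z hz hz0
    have hBne := hne (-z) hnz hnz0
    have dgz : DifferentiableAt ℂ g z := (hg z hz).differentiableAt
    have dgnz : DifferentiableAt ℂ g (-z) := (hg (-z) hnz).differentiableAt
    have Hgn : HasDerivAt (fun w => g (-w)) (-deriv g (-z)) z := by
      have := (dgnz.hasDerivAt).comp z (hasDerivAt_neg z)
      simpa [mul_comm, Function.comp_def] using this
    have Hnum : HasDerivAt (fun w => -(g w * g (-w)))
        (-(deriv g z * g (-z) + g z * (-deriv g (-z)))) z :=
      ((dgz.hasDerivAt).mul Hgn).neg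
    have H : HasDerivAt (fun w => -(g w * g (-w)) / w)
        (((-(deriv g z * g (-z) + g z * (-deriv g (-z)))) * z - (-(g z * g (-z))) * 1) / z ^ 2) z :=
      Hnum.div (hasDerivAt_id z) hz0
    have hF : h =ᶠ[nhds z] fun w => -(g w * g (-w)) / w := by
      filter_upwards [isOpen_compl_singleton.mem_nhds hz0] with w hw
      have hw' : w ≠ 0 := hw
      simp [hh, if_neg hw']
    have hzval : h z = -(g z * g (-z)) / z := by simp [hh, if_neg hz0]
    have key : z * deriv h z / h z
        = z * deriv g z / g z + (-z) * deriv g (-z) / g (-z) - 1 := by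
      rw [hF.deriv_eq, H.deriv, hzval]
      field_simp
      ring
    rw [key]
    simp only [Complex.sub_re, Complex.add_re, Complex.one_re]
    linarith
end
end

section
/- Let k ≥ 1 be a fixed positive integer and let ε = exp(2πi/k). If g is analytic on U with g(0)=0, g'(0)=1 and g is starlike of order (k-1)/k, and g_k(z) = ∏_{v=0}^{k-1} ε^{-v} g(ε^v z), then the function G_k(z) = g_k(z)/z^{k-1} (extended analytically at 0 with G_k(0)=0, G_k'(0)=1) is starlike on U, i.e. Re(z G_k'(z)/G_k(z)) > 0 for all nonzero z ∈ U. -/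
open Complex MeasureTheory

noncomputable section

lemma abs_eps (k : ℕ) : ‖eps k‖ = 1 := by
  rw [eps, Complex.norm_exp]
  norm_num [Complex.div_re, Complex.mul_re]

lemma eps_ne_zero (k : ℕ) : eps k ≠ 0 := Complex.exp_ne_zero _

theorem stmt1 (k : ℕ) (hk : 1 ≤ k) (g : ℂ → ℂ) (hg : AnalyticOn ℂ g unitDisk)
    (hn : Normalized g) (hs : StarlikeOfOrder ((k - 1 : ℝ) / k) g)
    (G : ℂ → ℂ) (hG : AnalyticOn ℂ G unitDisk) (hG0 : G 0 = 0) (hG1 : deriv G 0 = 1)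
    (hGk : ∀ z ∈ unitDisk, z ≠ 0 → G z = gk k g z / z ^ (k - 1)) :
    Starlike G := by
  intro z hz hz0
  have hkR : (0:ℝ) < k := by exact_mod_cast hk
  have hane : (0:ℝ) ≤ ((k:ℝ) - 1) / k := by
    apply div_nonneg _ hkR.le
    have : (1:ℝ) ≤ k := by exact_mod_cast hk
    linarith
  -- the rotated points
  set w : ℕ → ℂ := fun v => (eps k) ^ v * z with hw
  have hw_mem : ∀ v, w v ∈ unitDisk := by
    intro v
    simp only [unitDisk, Metric.mem_ball, dist_zero_right] at hz ⊢
    rw [hw]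
    simp only [norm_mul, norm_pow, abs_eps, one_pow, one_mul]
    exact hz
  have hw_ne : ∀ v, w v ≠ 0 := fun v => mul_ne_zero (pow_ne_zero _ (eps_ne_zero k)) hz0
  have hgw_ne : ∀ v, g (w v) ≠ 0 := by
    intro v hgv
    have := hs (w v) (hw_mem v) (hw_ne v)
    rw [hgv, div_zero, Complex.zero_re] at this
    linarith
  have hdg : ∀ v, HasDerivAt g (deriv g (w v)) (w v) := fun v =>
    ((hg.differentiableOn.differentiableAt (Metric.isOpen_ball.mem_nhds (hw_mem v)))).hasDerivAt
  -- factors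
  set F : ℕ → ℂ → ℂ := fun v z => (eps k) ^ (-(v : ℤ)) * g ((eps k) ^ v * z) with hF
  set F' : ℕ → ℂ := fun v => (eps k) ^ (-(v : ℤ)) * (deriv g (w v) * (eps k) ^ v) with hF'
  have hFd : ∀ v ∈ Finset.range k, HasDerivAt (F v) (F' v) z := by
    intro v _
    have h1 : HasDerivAt (fun z : ℂ => (eps k) ^ v * z) ((eps k) ^ v) z := by
      simpa using (hasDerivAt_id z).const_mul ((eps k) ^ v)
    exact ((hdg v).comp z h1).const_mul _
  have hFne : ∀ v, F v z ≠ 0 := fun v =>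
    mul_ne_zero (zpow_ne_zero _ (eps_ne_zero k)) (hgw_ne v)
  -- derivative of the product
  set h : ℂ := gk k g z with hh
  set D : ℂ := ∑ v ∈ Finset.range k, (∏ j ∈ (Finset.range k).erase v, F j z) • F' v with hD
  have hprod : HasDerivAt (gk k g) D z := by
    have := HasDerivAt.fun_finsetProd hFd
    exact this
  have hne : h ≠ 0 := Finset.prod_ne_zero_iff.2 fun v _ => hFne v
  -- T = log derivative sum
  set T : ℂ := ∑ v ∈ Finset.range k, F' v / F v z with hT
  have hDh : D = h * T := by
    rw [hD, hT, Finset.mul_sum]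
    refine Finset.sum_congr rfl fun v hv => ?_
    rw [smul_eq_mul]
    have hprod_eq : (∏ j ∈ (Finset.range k).erase v, F j z) * F v z = h := by
      rw [hh]; exact Finset.prod_erase_mul _ _ hv
    rw [← hprod_eq]
    field_simp [hFne v]
  -- derivative of z^(k-1)
  set m : ℕ := k - 1 with hm
  have hP : HasDerivAt (fun z : ℂ => z ^ m) ((m:ℂ) * z ^ (m - 1)) z := by
    simpa using hasDerivAt_pow m z
  have hPne : z ^ m ≠ 0 := pow_ne_zero _ hz0
  -- G equals gk/z^m near z; compute deriv G z
  have hSopen : IsOpen (unitDisk \ {0}) := Metric.isOpen_ball.sdiff isClosed_singleton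
  have hzS : z ∈ unitDisk \ {0} := ⟨hz, hz0⟩
  have hEq : Set.EqOn G (fun z => gk k g z / z ^ m) (unitDisk \ {0}) := fun x hx =>
    hGk x hx.1 hx.2
  have hderivG : deriv G z = (D * z ^ m - h * ((m:ℂ) * z ^ (m - 1))) / (z ^ m) ^ 2 := by
    have hev : G =ᶠ[nhds z] fun z => gk k g z / z ^ m :=
      Filter.eventuallyEq_of_mem (hSopen.mem_nhds hzS) hEq
    rw [hev.deriv_eq]
    exact (hprod.div hP hPne).deriv
  have hGz : G z = h / z ^ m := hGk z hz hz0
  -- key identity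
  have hzm : z * ((m:ℂ) * z ^ (m - 1)) = (m:ℂ) * z ^ m := by
    cases m with
    | zero => simp
    | succ n => rw [Nat.add_sub_cancel]; ring
  have key : z * deriv G z / G z =
      (∑ v ∈ Finset.range k, w v * deriv g (w v) / g (w v)) - (m:ℂ) := by
    rw [hderivG, hGz, hDh]
    have expand : z * ((h * T * z ^ m - h * ((m:ℂ) * z ^ (m - 1))) / (z ^ m) ^ 2) / (h / z ^ m)
        = z * T - z * ((m:ℂ) * z ^ (m - 1)) / z ^ m := by
      field_simp
    rw [expand, hzm, mul_div_assoc, div_self hPne, mul_one]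
    congr 1
    rw [hT, Finset.mul_sum]
    refine Finset.sum_congr rfl fun v hv => ?_
    rw [hF', hF, hw]
    simp only
    field_simp [zpow_ne_zero, eps_ne_zero, hgw_ne v]
  -- now the real part estimate
  rw [key]
  have hre : ((∑ v ∈ Finset.range k, w v * deriv g (w v) / g (w v)) - (m:ℂ)).re
      = (∑ v ∈ Finset.range k, (w v * deriv g (w v) / g (w v)).re) - (m:ℝ) := by
    rw [Complex.sub_re, Complex.natCast_re, Complex.re_sum]
  rw [hre]
  have hsum : ∑ v ∈ Finset.range k, ((k:ℝ) - 1) / k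
      < ∑ v ∈ Finset.range k, (w v * deriv g (w v) / g (w v)).re := by
    apply Finset.sum_lt_sum_of_nonempty
    · exact Finset.nonempty_range_iff.2 (by omega)
    · intro v _
      exact hs (w v) (hw_mem v) (hw_ne v)
  have hconst : ∑ _v ∈ Finset.range k, ((k:ℝ) - 1) / k = (m:ℝ) := by
    rw [Finset.sum_const, Finset.card_range, nsmul_eq_mul, hm]
    rw [Nat.cast_sub hk]
    field_simp
    norm_num
  linarith [hconst ▸ hsum]
end
end

section
/- If p(z) = 1 + c_1 z + c_2 z^2 + ⋯ is analytic on U with Re p(z) > 0, then for any complex number μ, |c_2 - μ c_1^2| ≤ 2 max{1, |2μ - 1|}. -/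
open Complex MeasureTheory

noncomputable section

section aux
open Metric Set

lemma mobius_normSq' (a w : ℂ) :
    Complex.normSq (1 - (starRingEnd ℂ) a * w) - Complex.normSq (w - a)
      = (1 - Complex.normSq a) * (1 - Complex.normSq w) := by
  simp only [Complex.normSq_apply, Complex.sub_re, Complex.sub_im, Complex.mul_re,
    Complex.mul_im, Complex.one_re, Complex.one_im, Complex.conj_re, Complex.conj_im]
  ring

lemma normSq_eq_norm_sq'' (z : ℂ) : Complex.normSq z = ‖z‖ ^ 2 := by
  rw [Complex.normSq_eq_norm_sq]

lemma pick_aux' (h : ℂ → ℂ) (hd : DifferentiableOn ℂ h (ball 0 1))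
    (hb : ∀ z ∈ ball (0:ℂ) 1, ‖h z‖ ≤ 1) : ‖deriv h 0‖ ≤ 1 - ‖h 0‖ ^ 2 := by
  have h0m : (0:ℂ) ∈ ball (0:ℂ) 1 := by simp
  set a := h 0 with ha_def
  have ha : ‖a‖ ≤ 1 := hb 0 h0m
  rcases eq_or_lt_of_le ha with hae | halt
  · -- max modulus: h constant
    have hmax : IsMaxOn (norm ∘ h) (ball (0:ℂ) 1) 0 := by
      intro z hz
      simpa [← hae] using hb z hz
    have hEq : EqOn h (Function.const ℂ (h 0)) (ball (0:ℂ) 1) :=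
      Complex.eqOn_of_isPreconnected_of_isMaxOn_norm (convex_ball _ _).isPreconnected
        isOpen_ball hd h0m hmax
    have hder : deriv h 0 = 0 := by
      have he : h =ᶠ[nhds (0:ℂ)] Function.const ℂ (h 0) :=
        Filter.eventuallyEq_of_mem (isOpen_ball.mem_nhds h0m) hEq
      rw [he.deriv_eq]
      exact deriv_const 0 _
    rw [hder, norm_zero, hae]
    norm_num
  · -- Möbius transform
    set F : ℂ → ℂ := fun z => (h z - a) / (1 - (starRingEnd ℂ) a * h z) with hF_def
    have hden : ∀ z ∈ ball (0:ℂ) 1, 1 - (starRingEnd ℂ) a * h z ≠ 0 := by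
      intro z hz hc
      have h1 : ‖(starRingEnd ℂ) a * h z‖ < 1 := by
        calc ‖(starRingEnd ℂ) a * h z‖ ≤ ‖a‖ * ‖h z‖ := by
              rw [norm_mul, RCLike.norm_conj]
            _ ≤ ‖a‖ * 1 := by
              have := hb z hz
              nlinarith [norm_nonneg a]
            _ < 1 := by simpa using halt
      have : (starRingEnd ℂ) a * h z = 1 := by linear_combination -hc
      rw [this] at h1; simp at h1
    have hFd : DifferentiableOn ℂ F (ball 0 1) :=
      (hd.sub_const a).div ((differentiableOn_const 1).sub
        ((differentiableOn_const _).mul hd)) hden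
    have hF0 : F 0 = 0 := by simp [hF_def, ha_def]
    have hFb : ∀ z ∈ ball (0:ℂ) 1, ‖F z‖ ≤ 1 := by
      intro z hz
      have hkey := mobius_normSq' a (h z)
      have hw : Complex.normSq (h z) ≤ 1 := by
        have := hb z hz
        rw [normSq_eq_norm_sq'']
        nlinarith [norm_nonneg (h z)]
      have haN : Complex.normSq a ≤ 1 := by
        rw [normSq_eq_norm_sq'']
        nlinarith [norm_nonneg a]
      have hineq : Complex.normSq (h z - a) ≤ Complex.normSq (1 - (starRingEnd ℂ) a * h z) := by
        nlinarith
      have hnorm : ‖h z - a‖ ≤ ‖1 - (starRingEnd ℂ) a * h z‖ := by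
        rw [normSq_eq_norm_sq'', normSq_eq_norm_sq''] at hineq
        nlinarith [norm_nonneg (h z - a), norm_nonneg (1 - (starRingEnd ℂ) a * h z)]
      rw [hF_def]
      simp only [norm_div]
      rw [div_le_one (norm_pos_iff.mpr (hden z hz))]
      exact hnorm
    -- derivative bound on F
    have hFder : ‖deriv F 0‖ ≤ 1 := by
      have step : ∀ ε : ℝ, 0 < ε → ‖deriv F 0‖ ≤ 1 + ε := by
        intro ε hε
        have hmaps : MapsTo F (ball (0:ℂ) 1) (ball (F 0) (1 + ε)) := by
          intro z hz
          rw [hF0, mem_ball_zero_iff]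
          exact lt_of_le_of_lt (hFb z hz) (by linarith)
        have := Complex.norm_deriv_le_div_of_mapsTo_ball hFd (hmaps.mono_right ball_subset_closedBall) one_pos
        simpa using this
      by_contra hcon
      push_neg at hcon
      have := step ((‖deriv F 0‖ - 1) / 2) (by linarith)
      linarith
    -- compute deriv F 0
    have hhd : DifferentiableAt ℂ h 0 := hd.differentiableAt (isOpen_ball.mem_nhds h0m)
    have hh0 : HasDerivAt h (deriv h 0) 0 := hhd.hasDerivAt
    have hdenne : (1 : ℂ) - (starRingEnd ℂ) a * a ≠ 0 := by simpa [ha_def] using hden 0 h0m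
    have hnq : (starRingEnd ℂ) a * a = (Complex.normSq a : ℂ) := by
      rw [mul_comm, Complex.mul_conj]
    have h1nq : (1 : ℂ) - (Complex.normSq a : ℂ) ≠ 0 := by rw [← hnq]; exact hdenne
    have hFat := (hh0.sub_const a).div
      (((hasDerivAt_const 0 ((starRingEnd ℂ) a)).mul hh0).const_sub 1)
      (by simpa [ha_def] using hdenne)
    have hFval : deriv F 0 = deriv h 0 / (1 - (Complex.normSq a : ℂ)) := by
      rw [(show HasDerivAt F ((deriv h 0 * (1 - (starRingEnd ℂ) a * h 0) - (h 0 - a) * -(0 * h 0 + (starRingEnd ℂ) a * deriv h 0)) / (1 - (starRingEnd ℂ) a * h 0) ^ 2) 0 from hFat).deriv, ← ha_def, hnq]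
      simp only [sub_self, zero_mul, mul_zero, zero_sub, zero_add, mul_neg, sub_neg_eq_add]
      rw [add_zero, sq, mul_div_assoc, div_mul_cancel_left₀ h1nq, ← div_eq_mul_inv]
    have hNlt : Complex.normSq a < 1 := by
      rw [normSq_eq_norm_sq'']
      nlinarith [norm_nonneg a]
    have hnormden : ‖(1 : ℂ) - (Complex.normSq a : ℂ)‖ = 1 - Complex.normSq a := by
      rw [show (1 : ℂ) - (Complex.normSq a : ℂ) = ((1 - Complex.normSq a : ℝ) : ℂ) by push_cast; ring]
      rw [Complex.norm_real, Real.norm_of_nonneg (by linarith)]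
    have hfin : ‖deriv h 0‖ / (1 - Complex.normSq a) ≤ 1 := by
      rw [hFval, norm_div, hnormden] at hFder
      exact hFder
    rw [div_le_one (by linarith)] at hfin
    rw [← normSq_eq_norm_sq'']
    linarith

lemma deriv2_eq_two_mul_deriv_dslope' (f : ℂ → ℂ) (hf : AnalyticAt ℂ f 0) :
    deriv (deriv f) 0 = 2 * deriv (dslope f 0) 0 := by
  obtain ⟨r, hr⟩ := hf
  have hh : HasFPowerSeriesAt (dslope f 0) r.fslope 0 := hr.has_fpower_series_dslope_fslope
  have hhA : AnalyticAt ℂ (dslope f 0) 0 := ⟨_, hh⟩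
  set h := dslope f 0 with hh_def
  -- f w = f 0 + w * h w for all w
  have hfw : ∀ w : ℂ, f w = f 0 + w * h w := by
    intro w
    have := sub_smul_dslope f 0 w
    rw [sub_zero, smul_eq_mul] at this
    rw [← hh_def] at this
    linear_combination -this
  -- get an open set where h is analytic
  obtain ⟨s, hs_sub, hs_open, hs_mem⟩ :=
    _root_.mem_nhds_iff.mp (hhA.eventually_analyticAt)
  have hsA : AnalyticOnNhd ℂ h s := fun z hz => hs_sub hz
  have hderf : ∀ z ∈ s, deriv f z = h z + z * deriv h z := by
    intro z hz
    have h1 : HasDerivAt h (deriv h z) z := ((hsA z hz).differentiableAt).hasDerivAt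
    have h2 : HasDerivAt (fun w => f 0 + w * h w) (1 * h z + z * deriv h z) z :=
      ((hasDerivAt_id z).mul h1).const_add (f 0)
    have h3 : HasDerivAt f (1 * h z + z * deriv h z) z := by
      apply h2.congr_of_eventuallyEq
      filter_upwards with w
      exact hfw w
    rw [h3.deriv]; ring
  have hev : deriv f =ᶠ[nhds (0:ℂ)] fun z => h z + z * deriv h z :=
    Filter.eventuallyEq_of_mem (hs_open.mem_nhds hs_mem) hderf
  rw [hev.deriv_eq]
  have hdh : HasDerivAt (deriv h) (deriv (deriv h) 0) 0 := by
    have : AnalyticAt ℂ (deriv h) 0 := (hsA.deriv_of_isOpen hs_open) 0 hs_mem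
    exact this.differentiableAt.hasDerivAt
  have h1 : HasDerivAt h (deriv h 0) 0 := hhA.differentiableAt.hasDerivAt
  have h2 : HasDerivAt (fun z => h z + z * deriv h z)
      (deriv h 0 + (1 * deriv h 0 + 0 * deriv (deriv h) 0)) 0 :=
    h1.add ((hasDerivAt_id 0).mul hdh)
  rw [h2.deriv]; ring

end aux

theorem stmt8 (p : ℂ → ℂ) (hp : AnalyticOn ℂ p unitDisk) (hp0 : p 0 = 1)
    (hpre : ∀ z ∈ unitDisk, 0 < (p z).re) (μ : ℂ) :
    ‖iteratedDeriv 2 p 0 / 2 - μ * (deriv p 0) ^ 2‖ ≤ 2 * max 1 ‖2 * μ - 1‖ := by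
  have hO : IsOpen unitDisk := Metric.isOpen_ball
  have h0 : (0:ℂ) ∈ unitDisk := by simp [unitDisk]
  have hpN : AnalyticOnNhd ℂ p unitDisk := (hO.analyticOn_iff_analyticOnNhd).mp hp
  have hne : ∀ z ∈ unitDisk, p z + 1 ≠ 0 := by
    intro z hz hc
    have h1 := hpre z hz
    have : p z = -1 := by linear_combination hc
    rw [this] at h1
    norm_num at h1
  set ω : ℂ → ℂ := fun z => (p z - 1) / (p z + 1) with hω_def
  have hω0 : ω 0 = 0 := by simp [hω_def, hp0]
  have hωN : AnalyticOnNhd ℂ ω unitDisk := fun z hz =>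
    ((hpN z hz).sub analyticAt_const).div ((hpN z hz).add analyticAt_const) (hne z hz)
  have hωd : DifferentiableOn ℂ ω unitDisk := hωN.differentiableOn
  -- ω maps the disk into itself
  have hmaps : Set.MapsTo ω unitDisk unitDisk := by
    intro z hz
    rw [unitDisk, _root_.mem_ball_zero_iff]
    have hre := hpre z hz
    have hlt : ‖p z - 1‖ < ‖p z + 1‖ := by
      have hsq : Complex.normSq (p z - 1) < Complex.normSq (p z + 1) := by
        simp only [Complex.normSq_apply, Complex.sub_re, Complex.sub_im, Complex.add_re,
          Complex.add_im, Complex.one_re, Complex.one_im]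
        nlinarith
      rw [normSq_eq_norm_sq'', normSq_eq_norm_sq''] at hsq
      nlinarith [norm_nonneg (p z - 1), norm_nonneg (p z + 1)]
    rw [hω_def]
    simp only [norm_div]
    rw [div_lt_one (lt_of_le_of_lt (norm_nonneg _) hlt)]
    exact hlt
  -- Schwarz lemma
  set h : ℂ → ℂ := dslope ω 0 with hh_def
  have hsch : ∀ z ∈ unitDisk, ‖h z‖ ≤ 1 := by
    intro z hz
    have hm : Set.MapsTo ω (Metric.ball 0 1) (Metric.ball (ω 0) 1) := by
      rw [hω0]; exact hmaps
    have := Complex.norm_dslope_le_div_of_mapsTo_ball hωd (hm.mono_right Metric.ball_subset_closedBall) hz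
    simpa using this
  have hhd : DifferentiableOn ℂ h (Metric.ball 0 1) := by
    intro z hz
    rcases eq_or_ne z 0 with rfl | hz0
    · have : AnalyticAt ℂ h 0 := by
        obtain ⟨r, hr⟩ := hωN 0 h0
        exact ⟨_, hr.has_fpower_series_dslope_fslope⟩
      exact this.differentiableAt.differentiableWithinAt
    · exact ((differentiableAt_dslope_of_ne hz0).mpr
        ((hωN z hz).differentiableAt)).differentiableWithinAt
  have hpick : ‖deriv h 0‖ ≤ 1 - ‖h 0‖ ^ 2 := pick_aux' h hhd hsch
  have ha1le : ‖h 0‖ ≤ 1 := hsch 0 h0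
  -- derivative computations
  set c1 : ℂ := deriv p 0 with hc1_def
  set C2 : ℂ := deriv (deriv p) 0 with hC2_def
  have hder : ∀ z ∈ unitDisk, deriv ω z = 2 * deriv p z / (p z + 1) ^ 2 := by
    intro z hz
    have hpz : HasDerivAt p (deriv p z) z := ((hpN z hz).differentiableAt).hasDerivAt
    have hq := (hpz.sub_const 1).div (hpz.add_const 1) (hne z hz)
    rw [(show HasDerivAt ω _ z from hq).deriv]
    have h2 := hne z hz
    field_simp
    ring
  have ha1 : h 0 = c1 / 2 := by
    rw [hh_def, dslope_same, hder 0 h0, hp0, hc1_def]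
    ring
  -- second derivative of ω at 0
  have hdd : deriv (deriv ω) 0 = (C2 - c1 ^ 2) / 2 := by
    have hev : deriv ω =ᶠ[nhds (0:ℂ)] fun z => 2 * deriv p z / (p z + 1) ^ 2 :=
      Filter.eventuallyEq_of_mem (hO.mem_nhds h0) hder
    rw [hev.deriv_eq]
    have hdp0 : HasDerivAt (deriv p) C2 0 :=
      ((hpN.deriv 0 h0).differentiableAt).hasDerivAt
    have hp0' : HasDerivAt p c1 0 := ((hpN 0 h0).differentiableAt).hasDerivAt
    have hnum : HasDerivAt (fun z => 2 * deriv p z) (2 * C2) 0 := hdp0.const_mul 2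
    have hden2 : HasDerivAt (fun z => (p z + 1) ^ 2)
        ((2 : ℕ) * (p 0 + 1) ^ (2 - 1) * c1) 0 := (hp0'.add_const 1).pow 2
    have hdenne : (p 0 + 1) ^ 2 ≠ 0 := pow_ne_zero 2 (hne 0 h0)
    have hq := hnum.div hden2 hdenne
    rw [(show HasDerivAt (fun z => 2 * deriv p z / (p z + 1) ^ 2) _ 0 from hq).deriv, hp0]
    norm_num
    ring
  have ha2 : deriv h 0 = (C2 - c1 ^ 2) / 4 := by
    have := deriv2_eq_two_mul_deriv_dslope' ω (hωN 0 h0)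
    rw [hdd] at this
    rw [hh_def]
    linear_combination -this / 2
  -- assemble
  have hit : iteratedDeriv 2 p 0 = C2 := by
    rw [iteratedDeriv_succ, iteratedDeriv_one]
  rw [hit]
  have hkey : C2 / 2 - μ * c1 ^ 2 = 2 * deriv h 0 - 2 * (2 * μ - 1) * (h 0) ^ 2 := by
    rw [ha2, ha1]; ring
  rw [hkey]
  have htn : ‖h 0‖ ≤ 1 := ha1le
  have ht2 : ‖h 0‖ ^ 2 ≤ 1 := by nlinarith [norm_nonneg (h 0)]
  calc ‖2 * deriv h 0 - 2 * (2 * μ - 1) * (h 0) ^ 2‖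
      ≤ ‖2 * deriv h 0‖ + ‖2 * (2 * μ - 1) * (h 0) ^ 2‖ := norm_sub_le _ _
    _ = 2 * ‖deriv h 0‖ + 2 * (‖2 * μ - 1‖ * ‖h 0‖ ^ 2) := by
        rw [norm_mul, norm_mul, norm_mul, norm_pow, show ‖(2:ℂ)‖ = 2 by norm_num]
        ring
    _ ≤ 2 * (1 - ‖h 0‖ ^ 2) + 2 * (‖2 * μ - 1‖ * ‖h 0‖ ^ 2) := by nlinarith
    _ ≤ 2 * max 1 ‖2 * μ - 1‖ := by
        rcases le_total ‖2 * μ - 1‖ 1 with hb1 | hb1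
        · have hm : (1:ℝ) ≤ max 1 ‖2 * μ - 1‖ := le_max_left _ _
          nlinarith [mul_nonneg (sub_nonneg.2 hb1) (sq_nonneg ‖h 0‖)]
        · have hm : ‖2 * μ - 1‖ ≤ max 1 ‖2 * μ - 1‖ := le_max_right _ _
          nlinarith [mul_nonneg (sub_nonneg.2 hb1) (sub_nonneg.2 ht2)]
end
end

section
/- Let G(z) = z + b_2 z^2 + b_3 z^3 + ⋯ be a normalized univalent starlike function on U. Then for any real λ, |b_3 - λ b_2^2| ≤ max{1, |3 - 4λ|}. -/
open Complex MeasureTheory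

noncomputable section

open Metric Set Filter

noncomputable section FSHelpers

private lemma aderiv {f : ℂ → ℂ} {x : ℂ} (h : AnalyticAt ℂ f x) : AnalyticAt ℂ (deriv f) x :=
  AnalyticOnNhd.deriv (s := {y | AnalyticAt ℂ f y}) (fun _ hy => hy) x h

private lemma d2_eq (f : ℂ → ℂ) (x : ℂ) : iteratedDeriv 2 f x = deriv (deriv f) x := by
  simp [iteratedDeriv_succ, iteratedDeriv_zero]

private lemma d2_congr {f g : ℂ → ℂ} {x : ℂ} (h : f =ᶠ[nhds x] g) :
    iteratedDeriv 2 f x = iteratedDeriv 2 g x := by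
  rw [d2_eq, d2_eq]; exact h.deriv.deriv_eq

private lemma ev_deriv_mul {u v : ℂ → ℂ} {x : ℂ} (hu : AnalyticAt ℂ u x) (hv : AnalyticAt ℂ v x) :
    deriv (fun z => u z * v z) =ᶠ[nhds x] fun z => deriv u z * v z + u z * deriv v z := by
  filter_upwards [hu.eventually_analyticAt, hv.eventually_analyticAt] with z h1 h2
  exact deriv_mul h1.differentiableAt h2.differentiableAt

private lemma d2_mul {u v : ℂ → ℂ} {x : ℂ} (hu : AnalyticAt ℂ u x) (hv : AnalyticAt ℂ v x) :
    iteratedDeriv 2 (fun z => u z * v z) x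
      = iteratedDeriv 2 u x * v x + 2 * deriv u x * deriv v x + u x * iteratedDeriv 2 v x := by
  rw [d2_eq, (ev_deriv_mul hu hv).deriv_eq,
    deriv_fun_add (f := fun z => deriv u z * v z) (g := fun z => u z * deriv v z) ((aderiv hu).mul hv).differentiableAt (hu.mul (aderiv hv)).differentiableAt,
    deriv_fun_mul (aderiv hu).differentiableAt hv.differentiableAt,
    deriv_fun_mul hu.differentiableAt (aderiv hv).differentiableAt, d2_eq, d2_eq]
  ring

private lemma d2_add {u v : ℂ → ℂ} {x : ℂ} (hu : AnalyticAt ℂ u x) (hv : AnalyticAt ℂ v x) :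
    iteratedDeriv 2 (fun z => u z + v z) x = iteratedDeriv 2 u x + iteratedDeriv 2 v x := by
  have hev : deriv (fun z => u z + v z) =ᶠ[nhds x] fun z => deriv u z + deriv v z := by
    filter_upwards [hu.eventually_analyticAt, hv.eventually_analyticAt] with z h1 h2
    exact deriv_add h1.differentiableAt h2.differentiableAt
  rw [d2_eq, hev.deriv_eq,
    deriv_fun_add (aderiv hu).differentiableAt (aderiv hv).differentiableAt, d2_eq, d2_eq]

private lemma zmul_d1 {u : ℂ → ℂ} (hu : AnalyticAt ℂ u 0) :
    deriv (fun z : ℂ => z * u z) 0 = u 0 := by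
  rw [deriv_fun_mul differentiableAt_fun_id hu.differentiableAt]
  simp

private lemma zmul_d2 {u : ℂ → ℂ} (hu : AnalyticAt ℂ u 0) :
    iteratedDeriv 2 (fun z : ℂ => z * u z) 0 = 2 * deriv u 0 := by
  have hid : AnalyticAt ℂ (fun z : ℂ => z) 0 := analyticAt_id
  rw [d2_mul (u := fun z : ℂ => z) (v := u) hid hu]
  have h1 : iteratedDeriv 2 (fun z : ℂ => z) 0 = 0 := by
    rw [d2_eq]; simp
  have h2 : deriv (fun z : ℂ => z) 0 = 1 := by simp
  rw [h1, h2]; ring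

private lemma zmul_d3 {u : ℂ → ℂ} (hu : AnalyticAt ℂ u 0) :
    iteratedDeriv 3 (fun z : ℂ => z * u z) 0 = 3 * iteratedDeriv 2 u 0 := by
  rw [iteratedDeriv_succ']
  have hev : deriv (fun z : ℂ => z * u z) =ᶠ[nhds 0] fun z => u z + z * deriv u z := by
    filter_upwards [hu.eventually_analyticAt] with z hz
    rw [deriv_fun_mul differentiableAt_fun_id hz.differentiableAt]
    simp
  have hid : AnalyticAt ℂ (fun z : ℂ => z) 0 := analyticAt_id
  have h3 : AnalyticAt ℂ (fun z : ℂ => z * deriv u z) 0 := hid.mul (aderiv hu)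
  rw [d2_congr hev, d2_add (u := u) (v := fun z : ℂ => z * deriv u z) hu h3,
    zmul_d2 (aderiv hu), d2_eq]
  ring

private lemma dslope_analyticOnNhd {f : ℂ → ℂ} (hf : AnalyticOnNhd ℂ f (ball (0:ℂ) 1))
    (h0 : f 0 = 0) : AnalyticOnNhd ℂ (dslope f 0) (ball (0:ℂ) 1) := by
  intro z hz
  rcases eq_or_ne z 0 with rfl | hzne
  · obtain ⟨p, hp⟩ := hf 0 hz
    exact ⟨_, hp.has_fpower_series_dslope_fslope⟩
  · have h1 : AnalyticAt ℂ (fun y => f y / y) z := (hf z hz).div analyticAt_id hzne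
    apply h1.congr
    filter_upwards [eventually_ne_nhds hzne] with y hy
    rw [dslope_of_ne _ hy, slope_def_field, h0, sub_zero, sub_zero]

private lemma mobius_lt {a u : ℂ} (ha : ‖a‖ < 1) (hu : ‖u‖ < 1) :
    ‖(u - a) / (1 - (starRingEnd ℂ) a * u)‖ < 1 := by
  have hns : Complex.normSq (u - a) < Complex.normSq (1 - (starRingEnd ℂ) a * u) := by
    have h1 : Complex.normSq u < 1 := by
      rw [Complex.normSq_eq_norm_sq]; nlinarith [norm_nonneg u]
    have h2 : Complex.normSq a < 1 := by
      rw [Complex.normSq_eq_norm_sq]; nlinarith [norm_nonneg a]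
    simp only [Complex.normSq_apply, Complex.sub_re, Complex.sub_im, Complex.mul_re,
      Complex.mul_im, Complex.one_re, Complex.one_im, Complex.conj_re, Complex.conj_im] at *
    nlinarith [mul_pos (sub_pos.2 h2) (sub_pos.2 h1), sq_nonneg (a.re*u.re + a.im*u.im)]
  have hlt : ‖u - a‖ < ‖1 - (starRingEnd ℂ) a * u‖ := by
    rw [Complex.norm_def, Complex.norm_def]
    exact Real.sqrt_lt_sqrt (Complex.normSq_nonneg _) hns
  have hpos : 0 < ‖(1:ℂ) - (starRingEnd ℂ) a * u‖ := lt_of_le_of_lt (norm_nonneg _) hlt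
  rw [norm_div, div_lt_one hpos]
  exact hlt

private lemma schwarz_two {w : ℂ → ℂ} (hw : AnalyticOnNhd ℂ w (ball (0:ℂ) 1)) (h0 : w 0 = 0)
    (hb : ∀ z ∈ ball (0:ℂ) 1, ‖w z‖ < 1) :
    ‖deriv w 0‖ ≤ 1 ∧ ‖iteratedDeriv 2 w 0‖ ≤ 2 * (1 - ‖deriv w 0‖ ^ 2) := by
  have h0mem : (0:ℂ) ∈ ball (0:ℂ) 1 := mem_ball_self one_pos
  set σ := dslope w 0 with hσdef
  have hσA : AnalyticOnNhd ℂ σ (ball (0:ℂ) 1) := dslope_analyticOnNhd hw h0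
  have hmaps : MapsTo w (ball (0:ℂ) 1) (ball (w 0) 1) := by
    intro z hz; rw [h0, mem_ball_zero_iff]; exact hb z hz
  have hσle : ∀ z ∈ ball (0:ℂ) 1, ‖σ z‖ ≤ 1 := by
    intro z hz
    simpa using Complex.norm_dslope_le_div_of_mapsTo_ball hw.differentiableOn (hmaps.mono_right ball_subset_closedBall) hz
  have hwz : ∀ z : ℂ, w z = z * σ z := by
    intro z
    have := sub_smul_dslope w 0 z
    rw [h0, sub_zero, sub_zero, smul_eq_mul] at this
    exact this.symm
  have hd : deriv w 0 = σ 0 := (dslope_same w 0).symm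
  have hd2 : iteratedDeriv 2 w 0 = 2 * deriv σ 0 := by
    rw [show w = fun z => z * σ z from funext hwz]
    exact zmul_d2 (hσA 0 h0mem)
  have ha1 : ‖deriv w 0‖ ≤ 1 := by rw [hd]; exact hσle 0 h0mem
  refine ⟨ha1, ?_⟩
  rcases lt_or_ge ‖σ 0‖ 1 with hlt | hge
  · -- strict case
    have hσlt : ∀ z ∈ ball (0:ℂ) 1, ‖σ z‖ < 1 := by
      intro z hz
      rcases lt_or_ge ‖σ z‖ 1 with h | h
      · exact h
      · exfalso
        have heq : ‖σ z‖ = 1 := le_antisymm (hσle z hz) h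
        have hmax : IsMaxOn (norm ∘ σ) (ball (0:ℂ) 1) z := by
          intro y hy
          simp only [Function.comp_apply, mem_setOf_eq, heq]
          exact hσle y hy
        have hcon := Complex.eqOn_of_isPreconnected_of_isMaxOn_norm
          (convex_ball (0:ℂ) 1).isPreconnected isOpen_ball hσA.differentiableOn hz hmax h0mem
        simp only [Function.const_apply] at hcon
        rw [hcon] at hlt
        rw [heq] at hlt
        exact lt_irrefl _ hlt
    set a := σ 0 with hadef
    have han : ‖a‖ < 1 := hlt
    set τ := fun z => (σ z - a) / (1 - (starRingEnd ℂ) a * σ z) with hτdef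
    have hden : ∀ z ∈ ball (0:ℂ) 1, (1:ℂ) - (starRingEnd ℂ) a * σ z ≠ 0 := by
      intro z hz hc
      have h1 : ‖(starRingEnd ℂ) a * σ z‖ < 1 := by
        rw [norm_mul, RCLike.norm_conj]
        calc ‖a‖ * ‖σ z‖ ≤ ‖a‖ * 1 := by
              exact mul_le_mul_of_nonneg_left (hσle z hz) (norm_nonneg a)
          _ < 1 := by rw [mul_one]; exact han
      rw [sub_eq_zero] at hc
      rw [← hc] at h1
      simp at h1
    have hτd : DifferentiableOn ℂ τ (ball (0:ℂ) 1) := by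
      intro z hz
      exact (((hσA z hz).sub analyticAt_const).div
        (analyticAt_const.sub (analyticAt_const.mul (hσA z hz)))
        (hden z hz)).differentiableAt.differentiableWithinAt
    have hτ0 : τ 0 = 0 := by simp [hτdef, hadef]
    have hτmaps : MapsTo τ (ball (0:ℂ) 1) (ball (τ 0) 1) := by
      intro z hz
      rw [hτ0, mem_ball_zero_iff]
      exact mobius_lt han (hσlt z hz)
    have hbound := Complex.norm_deriv_le_div_of_mapsTo_ball hτd (hτmaps.mono_right ball_subset_closedBall) one_pos
    rw [div_one] at hbound
    -- compute deriv τ 0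
    have hσd : HasDerivAt σ (deriv σ 0) 0 := (hσA 0 h0mem).differentiableAt.hasDerivAt
    have h1 : HasDerivAt (fun z => σ z - a) (deriv σ 0) 0 := hσd.sub_const a
    have h2 : HasDerivAt (fun z => (1:ℂ) - (starRingEnd ℂ) a * σ z)
        (0 - (starRingEnd ℂ) a * deriv σ 0) 0 :=
      (hasDerivAt_const 0 (1:ℂ)).sub (hσd.const_mul ((starRingEnd ℂ) a))
    have hderivτ : deriv τ 0 = deriv σ 0 / (1 - (starRingEnd ℂ) a * a) := by
      have h4 := (h1.div h2 (hden 0 h0mem)).deriv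
      rw [show τ = ((fun z => σ z - a) / fun z => 1 - (starRingEnd ℂ) a * σ z) from rfl, h4, ← hadef,
        sub_self]
      have hne : (1:ℂ) - (starRingEnd ℂ) a * a ≠ 0 := hden 0 h0mem
      rw [div_eq_div_iff (pow_ne_zero 2 hne) hne]
      ring
    have hre : (1:ℂ) - (starRingEnd ℂ) a * a = ((1 - ‖a‖^2 : ℝ) : ℂ) := by
      rw [Complex.conj_mul']; push_cast; ring
    have hpos : (0:ℝ) < 1 - ‖a‖^2 := by nlinarith [norm_nonneg a]
    have hnτ : ‖deriv τ 0‖ = ‖deriv σ 0‖ / (1 - ‖a‖^2) := by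
      rw [hderivτ, hre, norm_div, Complex.norm_real, Real.norm_of_nonneg hpos.le]
    have hfin : ‖deriv σ 0‖ ≤ 1 - ‖a‖^2 := by
      rw [hnτ, div_le_one hpos] at hbound
      exact hbound
    rw [hd2, hd, norm_mul]
    simp only [Complex.norm_ofNat]
    nlinarith [hfin]
  · -- boundary case : ‖σ 0‖ = 1
    have heq : ‖σ 0‖ = 1 := le_antisymm (hσle 0 h0mem) hge
    have hmax : IsMaxOn (norm ∘ σ) (ball (0:ℂ) 1) 0 := by
      intro y hy
      simp only [Function.comp_apply, mem_setOf_eq, heq]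
      exact hσle y hy
    have hcon := Complex.eqOn_of_isPreconnected_of_isMaxOn_norm
      (convex_ball (0:ℂ) 1).isPreconnected isOpen_ball hσA.differentiableOn h0mem hmax
    have hevc : σ =ᶠ[nhds 0] fun _ => σ 0 := by
      filter_upwards [isOpen_ball.mem_nhds h0mem] with z hz
      simpa using hcon hz
    have hds0 : deriv σ 0 = 0 := by
      rw [hevc.deriv_eq, deriv_const]
    rw [hd2, hds0, mul_zero, norm_zero, hd]
    nlinarith [heq]

end FSHelpers

theorem stmt9 (G : ℂ → ℂ) (hG : AnalyticOn ℂ G unitDisk) (hn : Normalized G)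
    (hinj : Set.InjOn G unitDisk) (hs : Starlike G) (lam : ℝ) :
    ‖iteratedDeriv 3 G 0 / 6 - (lam : ℂ) * (iteratedDeriv 2 G 0 / 2) ^ 2‖ ≤
      max 1 |3 - 4 * lam| := by
  obtain ⟨hG0, hG1⟩ := hn
  have hGn : AnalyticOnNhd ℂ G (ball (0:ℂ) 1) :=
    (isOpen_ball.analyticOn_iff_analyticOnNhd).mp hG
  have h0mem : (0:ℂ) ∈ ball (0:ℂ) 1 := mem_ball_self one_pos
  -- G z ≠ 0 for z ≠ 0 in the disk
  have hGne : ∀ z ∈ ball (0:ℂ) 1, z ≠ 0 → G z ≠ 0 := by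
    intro z hz hzne hGz
    have h1 := hs z hz hzne
    rw [hGz, div_zero] at h1
    simp at h1
  set h : ℂ → ℂ := dslope G 0 with hhdef
  have hhA : AnalyticOnNhd ℂ h (ball (0:ℂ) 1) := dslope_analyticOnNhd hGn hG0
  have hG_eq : ∀ z : ℂ, G z = z * h z := by
    intro z
    have h1 := sub_smul_dslope G 0 z
    rw [hG0, sub_zero, sub_zero, smul_eq_mul] at h1
    exact h1.symm
  have hh0 : h 0 = 1 := by rw [hhdef, dslope_same, hG1]
  have hhne : ∀ z ∈ ball (0:ℂ) 1, h z ≠ 0 := by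
    intro z hz
    rcases eq_or_ne z 0 with rfl | hzne
    · rw [hh0]; exact one_ne_zero
    · intro hc
      exact hGne z hz hzne (by rw [hG_eq z, hc, mul_zero])
  set p : ℂ → ℂ := fun z => deriv G z / h z with hpdef
  have hpA : AnalyticOnNhd ℂ p (ball (0:ℂ) 1) :=
    fun z hz => (hGn.deriv z hz).div (hhA z hz) (hhne z hz)
  have hp0 : p 0 = 1 := by
    show deriv G 0 / h 0 = 1
    rw [hG1, hh0, div_one]
  have hpre : ∀ z ∈ ball (0:ℂ) 1, 0 < (p z).re := by
    intro z hz
    rcases eq_or_ne z 0 with rfl | hzne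
    · rw [hp0]; norm_num
    · have h1 : p z = z * deriv G z / G z := by
        show deriv G z / h z = z * deriv G z / G z
        have h2 : h z = G z / z := by
          rw [eq_div_iff hzne, mul_comm]
          exact (hG_eq z).symm
        rw [h2, div_div_eq_mul_div, mul_comm]
      rw [h1]
      exact hs z hz hzne
  have hp1ne : ∀ z ∈ ball (0:ℂ) 1, p z + 1 ≠ 0 := by
    intro z hz hc
    have h1 : (p z + 1).re = 0 := by rw [hc]; simp
    rw [Complex.add_re, Complex.one_re] at h1
    linarith [hpre z hz]
  set w : ℂ → ℂ := fun z => (p z - 1) / (p z + 1) with hwdef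
  have hwA : AnalyticOnNhd ℂ w (ball (0:ℂ) 1) :=
    fun z hz => ((hpA z hz).sub analyticAt_const).div
      ((hpA z hz).add analyticAt_const) (hp1ne z hz)
  have hw0 : w 0 = 0 := by
    show (p 0 - 1) / (p 0 + 1) = 0
    rw [hp0]; simp
  have hwlt : ∀ z ∈ ball (0:ℂ) 1, ‖w z‖ < 1 := by
    intro z hz
    show ‖(p z - 1) / (p z + 1)‖ < 1
    have hns : Complex.normSq (p z - 1) < Complex.normSq (p z + 1) := by
      have h1 := hpre z hz
      simp only [Complex.normSq_apply, Complex.sub_re, Complex.sub_im, Complex.add_re,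
        Complex.add_im, Complex.one_re, Complex.one_im]
      nlinarith [h1]
    have hlt : ‖p z - 1‖ < ‖p z + 1‖ := by
      rw [Complex.norm_def, Complex.norm_def]
      exact Real.sqrt_lt_sqrt (Complex.normSq_nonneg _) hns
    rw [norm_div, div_lt_one (lt_of_le_of_lt (norm_nonneg _) hlt)]
    exact hlt
  -- coefficients
  set b2 : ℂ := deriv h 0 with hb2def
  set B : ℂ := iteratedDeriv 2 h 0 with hBdef
  have hG2 : iteratedDeriv 2 G 0 = 2 * b2 := by
    rw [show G = fun z => z * h z from funext hG_eq]
    exact zmul_d2 (hhA 0 h0mem)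
  have hG3 : iteratedDeriv 3 G 0 = 3 * B := by
    rw [show G = fun z => z * h z from funext hG_eq]
    exact zmul_d3 (hhA 0 h0mem)
  have hev : deriv G =ᶠ[nhds (0:ℂ)] fun z => p z * h z := by
    filter_upwards [isOpen_ball.mem_nhds h0mem] with z hz
    show deriv G z = deriv G z / h z * h z
    rw [div_mul_cancel₀ _ (hhne z hz)]
  have hdp0 : deriv p 0 = b2 := by
    have e1 : deriv (deriv G) 0 = deriv (fun z => p z * h z) 0 := hev.deriv_eq
    rw [deriv_fun_mul (hpA 0 h0mem).differentiableAt (hhA 0 h0mem).differentiableAt,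
      hp0, hh0] at e1
    have e2 : deriv (deriv G) 0 = 2 * b2 := by rw [← d2_eq, hG2]
    rw [e2] at e1
    rw [← hb2def] at e1
    linear_combination -e1
  have hd2p0 : iteratedDeriv 2 p 0 = 2 * B - 2 * b2 ^ 2 := by
    have e1 : iteratedDeriv 2 (deriv G) 0 = iteratedDeriv 2 (fun z => p z * h z) 0 :=
      d2_congr hev
    rw [d2_mul (hpA 0 h0mem) (hhA 0 h0mem), hp0, hh0, hdp0] at e1
    have e2 : iteratedDeriv 2 (deriv G) 0 = 3 * B := by
      rw [← iteratedDeriv_succ', hG3]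
    rw [e2] at e1
    rw [← hb2def, ← hBdef] at e1
    linear_combination -e1
  -- w relations
  have hevw : (fun z => w z * (p z + 1)) =ᶠ[nhds (0:ℂ)] fun z => p z - 1 := by
    filter_upwards [isOpen_ball.mem_nhds h0mem] with z hz
    show (p z - 1) / (p z + 1) * (p z + 1) = p z - 1
    exact div_mul_cancel₀ _ (hp1ne z hz)
  have hp1A : AnalyticAt ℂ (fun z => p z + 1) 0 := (hpA 0 h0mem).add analyticAt_const
  have hw1 : deriv w 0 = b2 / 2 := by
    have e1 := hevw.deriv_eq
    rw [deriv_fun_mul (hwA 0 h0mem).differentiableAt hp1A.differentiableAt, hw0, hp0,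
      deriv_sub_const, deriv_add_const, hdp0] at e1
    linear_combination e1 / 2
  have hw2 : iteratedDeriv 2 w 0 = B - (3/2) * b2 ^ 2 := by
    have e1 := d2_congr hevw
    rw [d2_mul (hwA 0 h0mem) hp1A, hw0, hp0] at e1
    have ef1 : (deriv fun z => p z + 1) = deriv p := funext fun x => deriv_add_const 1
    have ef2 : (deriv fun z => p z - 1) = deriv p := funext fun x => deriv_sub_const 1
    have e2 : iteratedDeriv 2 (fun z => p z + 1) 0 = iteratedDeriv 2 p 0 := by
      rw [d2_eq, d2_eq, ef1]
    have e3 : iteratedDeriv 2 (fun z => p z - 1) 0 = iteratedDeriv 2 p 0 := by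
      rw [d2_eq, d2_eq, ef2]
    have e4 : deriv (fun z => p z + 1) 0 = deriv p 0 := deriv_add_const 1
    rw [e2, e3, e4, hdp0, hw1, hd2p0] at e1
    linear_combination e1 / 2
  -- Schwarz estimates
  obtain ⟨ha1, ha2⟩ := schwarz_two hwA hw0 hwlt
  -- final computation
  have key : iteratedDeriv 3 G 0 / 6 - (lam : ℂ) * (iteratedDeriv 2 G 0 / 2) ^ 2
      = iteratedDeriv 2 w 0 / 2 + ((3 : ℂ) - 4 * (lam : ℂ)) * (deriv w 0) ^ 2 := by
    rw [hG3, hG2, hw2, hw1]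
    ring
  rw [key]
  have hcoef : ‖(3 : ℂ) - 4 * (lam : ℂ)‖ = |3 - 4 * lam| := by
    rw [show (3 : ℂ) - 4 * (lam : ℂ) = ((3 - 4 * lam : ℝ) : ℂ) by push_cast; ring,
      Complex.norm_real, Real.norm_eq_abs]
  set t := ‖deriv w 0‖ with htdef
  have hstep : ‖iteratedDeriv 2 w 0 / 2 + ((3 : ℂ) - 4 * (lam : ℂ)) * (deriv w 0) ^ 2‖
      ≤ (1 - t ^ 2) + |3 - 4 * lam| * t ^ 2 := by
    calc ‖iteratedDeriv 2 w 0 / 2 + ((3 : ℂ) - 4 * (lam : ℂ)) * (deriv w 0) ^ 2‖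
        ≤ ‖iteratedDeriv 2 w 0 / 2‖ + ‖((3 : ℂ) - 4 * (lam : ℂ)) * (deriv w 0) ^ 2‖ :=
          norm_add_le _ _
      _ = ‖iteratedDeriv 2 w 0‖ / 2 + |3 - 4 * lam| * t ^ 2 := by
          rw [norm_div, norm_mul, norm_pow, hcoef, Complex.norm_ofNat]
      _ ≤ (1 - t ^ 2) + |3 - 4 * lam| * t ^ 2 := by
          have := ha2
          linarith
  refine hstep.trans ?_
  have h1le : (1:ℝ) ≤ max 1 |3 - 4 * lam| := le_max_left _ _
  have h2le : |3 - 4 * lam| ≤ max 1 |3 - 4 * lam| := le_max_right _ _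
  have ht1 : t ≤ 1 := ha1
  have ht0 : 0 ≤ t := norm_nonneg _
  nlinarith [mul_nonneg (sub_nonneg.2 h1le) (sub_nonneg.2 (by nlinarith : t ^ 2 ≤ 1)),
    mul_nonneg (sq_nonneg t) (sub_nonneg.2 h2le)]
end
end

section
/- Let 0 ≤ μ ≤ λ ≤ 1, -1 ≤ B < A ≤ 1, and let f(z) = z + ∑_{n≥2} a_n z^n be normalized analytic on U. Let g be normalized analytic and starlike of order (k-1)/k, g_k(z) = ∏_{v=0}^{k-1} ε^{-v} g(ε^v z) with ε = exp(2πi/k), and let B_n denote the Taylor coefficients of G_k(z) = g_k(z)/z^{k-1} = z + ∑_{n≥2} B_n z^n. If (1+|B|) ∑_{n≥2} n[1 + (n-1)(λ - μ + nλμ)] |a_n| + (1+|A|) ∑_{n≥2} |B_n| ≤ A - B, then for all z ∈ U: |z f'(z) + z^2 f''(z)(λ-μ+2λμ) + λμ z^3 f'''(z) - G_k(z)| < |A·G_k(z) - B(z f'(z) + z^2 f''(z)(λ-μ+2λμ) + λμ z^3 f'''(z))|, i.e. f ∈ K_s^{(k)}(λ,μ,A,B). -/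
open Complex MeasureTheory

noncomputable section

private def cc (l m : ℝ) (n : ℕ) : ℝ := n * (1 + ((n : ℝ) - 1) * (l - m + n * l * m))

private lemma derivStep {f : ℂ → ℂ} {p : FormalMultilinearSeries ℂ ℂ ℂ} {r : ENNReal}
    (h : HasFPowerSeriesOnBall f p 0 r) :
    ∃ q : FormalMultilinearSeries ℂ ℂ ℂ, HasFPowerSeriesOnBall (deriv f) q 0 r ∧
      ∀ n, q.coeff n = ((n : ℂ) + 1) * p.coeff (n + 1) := by
  refine ⟨(ContinuousLinearMap.apply ℂ ℂ (1 : ℂ)).compFormalMultilinearSeries p.derivSeries,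
    ?_, ?_⟩
  · have h2 := (ContinuousLinearMap.apply ℂ ℂ (1 : ℂ)).comp_hasFPowerSeriesOnBall h.fderiv
    have : (ContinuousLinearMap.apply ℂ ℂ (1 : ℂ)) ∘ (fderiv ℂ f) = deriv f := by
      funext x
      simp [ContinuousLinearMap.apply_apply, fderiv_apply_one_eq_deriv]
    rwa [this] at h2
  · intro n
    have h3 := p.derivSeries_apply_diag n (1 : ℂ)
    simp only [FormalMultilinearSeries.coeff,
      ContinuousLinearMap.compFormalMultilinearSeries_apply,
      ContinuousLinearMap.compContinuousMultilinearMap_coe, Function.comp_apply,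
      ContinuousLinearMap.apply_apply]
    calc ((p.derivSeries n) (1 : Fin n → ℂ)) 1
        = (n + 1) • (p (n + 1)) fun _ => (1 : ℂ) := h3
      _ = ((n : ℂ) + 1) * (p (n + 1)) fun _ => (1 : ℂ) := by
          rw [nsmul_eq_mul]; push_cast; ring
      _ = ((n : ℂ) + 1) * (p (n + 1)) 1 := rfl

private lemma mem_eball_iff {y : ℂ} : y ∈ Metric.eball (0 : ℂ) 1 ↔ ‖y‖ < 1 := by
  rw [EMetric.mem_ball, edist_zero_right, ← ofReal_norm]
  exact ENNReal.ofReal_lt_one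

set_option maxHeartbeats 1000000 in
theorem stmt10 (k : ℕ) (hk : 1 ≤ k) (l m A B : ℝ)
    (h0 : 0 ≤ m) (hml : m ≤ l) (hl : l ≤ 1) (hB : -1 ≤ B) (hBA : B < A) (hA : A ≤ 1)
    (f : ℂ → ℂ) (a : ℕ → ℂ) (hf : AnalyticOn ℂ f unitDisk)
    (ha : ∀ z ∈ unitDisk, f z = ∑' n : ℕ, a n * z ^ n) (ha0 : a 0 = 0) (ha1 : a 1 = 1)
    (g : ℂ → ℂ) (hg : AnalyticOn ℂ g unitDisk) (hgn : Normalized g)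
    (hgs : StarlikeOfOrder ((k - 1 : ℝ) / k) g)
    (G : ℂ → ℂ) (Bc : ℕ → ℂ) (hG : AnalyticOn ℂ G unitDisk)
    (hGk : ∀ z ∈ unitDisk, z ≠ 0 → G z = gk k g z / z ^ (k - 1))
    (hBcs : ∀ z ∈ unitDisk, G z = ∑' n : ℕ, Bc n * z ^ n) (hBc0 : Bc 0 = 0) (hBc1 : Bc 1 = 1)
    (hsa : Summable (fun n : ℕ => ((n + 2 : ℝ)) * (1 + (n + 1 : ℝ) * (l - m + (n + 2 : ℝ) * l * m)) * ‖a (n + 2)‖))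
    (hsB : Summable (fun n : ℕ => ‖Bc (n + 2)‖))
    (hineq : (1 + |B|) * (∑' n : ℕ, ((n + 2 : ℝ)) * (1 + (n + 1 : ℝ) * (l - m + (n + 2 : ℝ) * l * m)) * ‖a (n + 2)‖)
        + (1 + |A|) * (∑' n : ℕ, ‖Bc (n + 2)‖) ≤ A - B) :
    ∀ z ∈ unitDisk, z ≠ 0 →
      ‖z * deriv f z + z ^ 2 * iteratedDeriv 2 f z * ((l : ℂ) - m + 2 * l * m)
          + (l : ℂ) * m * z ^ 3 * iteratedDeriv 3 f z - G z‖ <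
      ‖(A : ℂ) * G z - (B : ℂ) * (z * deriv f z + z ^ 2 * iteratedDeriv 2 f z * ((l : ℂ) - m + 2 * l * m)
          + (l : ℂ) * m * z ^ 3 * iteratedDeriv 3 f z)‖ := by
  intro z hz hz0
  have hzlt : ‖z‖ < 1 := by simpa [unitDisk, Metric.mem_ball, dist_zero_right] using hz
  have hzpos : 0 < ‖z‖ := norm_pos_iff.mpr hz0
  have hl0 : 0 ≤ l := h0.trans hml
  have hlm : 0 ≤ l - m := sub_nonneg.2 hml
  have hlm2 : 0 ≤ l * m := mul_nonneg hl0 h0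
  have hcc0 : ∀ n : ℕ, 0 ≤ cc l m (n + 2) := by
    intro n
    have hn : (0 : ℝ) ≤ (n : ℝ) := Nat.cast_nonneg n
    simp only [cc]; push_cast
    nlinarith [mul_nonneg hn hlm, mul_nonneg (mul_nonneg hn hn) hlm, mul_nonneg hn hlm2,
      mul_nonneg (mul_nonneg hn hn) hlm2, mul_nonneg (mul_nonneg (mul_nonneg hn hn) hn) hlm2]
  have hcc1 : ∀ n : ℕ, 1 ≤ cc l m (n + 2) := by
    intro n
    have hn : (0 : ℝ) ≤ (n : ℝ) := Nat.cast_nonneg n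
    simp only [cc]; push_cast
    nlinarith [mul_nonneg hn hlm, mul_nonneg (mul_nonneg hn hn) hlm, mul_nonneg hn hlm2,
      mul_nonneg (mul_nonneg hn hn) hlm2, mul_nonneg (mul_nonneg (mul_nonneg hn hn) hn) hlm2]
  have hsa' : Summable (fun n : ℕ => cc l m (n + 2) * ‖a (n + 2)‖) :=
    hsa.congr (fun n => by simp only [cc]; push_cast; ring)
  set Sa := ∑' n : ℕ, cc l m (n + 2) * ‖a (n + 2)‖ with hSadef
  set SB := ∑' n : ℕ, ‖Bc (n + 2)‖ with hSBdef
  have hineq' : (1 + |B|) * Sa + (1 + |A|) * SB ≤ A - B := by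
    have e1 : (∑' n : ℕ, ((n + 2 : ℝ)) * (1 + (n + 1 : ℝ) * (l - m + (n + 2 : ℝ) * l * m)) * ‖a (n + 2)‖) = Sa :=
      tsum_congr (fun n => by simp only [cc]; push_cast; ring)
    rw [e1] at hineq
    exact hineq
  have hSa0 : 0 ≤ Sa := tsum_nonneg (fun n => mul_nonneg (hcc0 n) (norm_nonneg _))
  have hSB0 : 0 ≤ SB := tsum_nonneg (fun n => norm_nonneg _)
  have hsuma2 : Summable (fun n : ℕ => ‖a (n + 2)‖) :=
    Summable.of_nonneg_of_le (fun n => norm_nonneg _)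
      (fun n => le_mul_of_one_le_left (norm_nonneg _) (hcc1 n)) hsa'
  have hsuma : Summable (fun n : ℕ => ‖a n‖) := (summable_nat_add_iff 2).1 hsuma2
  have hsumB : Summable (fun n : ℕ => ‖Bc n‖) := (summable_nat_add_iff 2).1 hsB
  -- the power series of f on the unit ball
  set p0 : FormalMultilinearSeries ℂ ℂ ℂ := FormalMultilinearSeries.ofScalars ℂ a with hp0def
  have hp0c : ∀ n, p0.coeff n = a n := by
    intro n
    show p0 n (fun _ => (1 : ℂ)) = a n
    rw [hp0def, FormalMultilinearSeries.ofScalars_apply_eq]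
    simp
  have hp0norm : ∀ n, ‖p0 n‖ = ‖a n‖ := fun n => by
    rw [FormalMultilinearSeries.norm_apply_eq_norm_coef, hp0c]
  have hrad : 1 ≤ p0.radius := by
    have h1 : Summable (fun n : ℕ => ‖p0 n‖ * (1 : ℝ) ^ n) := by
      simpa [hp0norm] using hsuma
    simpa using p0.le_radius_of_summable (r := 1) h1
  have hsummaker : ∀ y : ℂ, ‖y‖ < 1 → Summable (fun n : ℕ => a n * y ^ n) := by
    intro y hy
    refine Summable.of_norm (Summable.of_nonneg_of_le (fun n => norm_nonneg _) (fun n => ?_) hsuma)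
    rw [norm_mul, norm_pow]
    exact mul_le_of_le_one_right (norm_nonneg _) (pow_le_one₀ (norm_nonneg y) hy.le)
  have hp0ball : HasFPowerSeriesOnBall f p0 0 1 := by
    refine ⟨hrad, zero_lt_one, ?_⟩
    intro y hy
    have hy' : ‖y‖ < 1 := mem_eball_iff.1 hy
    have hs := (hsummaker y hy').hasSum
    rw [← ha y (by simpa [unitDisk, Metric.mem_ball, dist_zero_right] using hy')] at hs
    have e : (fun n : ℕ => p0 n fun _ => y) = fun n : ℕ => a n * y ^ n := by
      funext n
      rw [hp0def, FormalMultilinearSeries.ofScalars_apply_eq]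
      simp
    rw [zero_add, e]
    exact hs
  obtain ⟨p1, hp1, hc1⟩ := derivStep hp0ball
  obtain ⟨p2, hp2, hc2⟩ := derivStep hp1
  obtain ⟨p3, hp3, hc3⟩ := derivStep hp2
  have hzball : z ∈ EMetric.ball (0 : ℂ) 1 := mem_eball_iff.2 hzlt
  have key : ∀ (F' : ℂ → ℂ) (q : FormalMultilinearSeries ℂ ℂ ℂ),
      HasFPowerSeriesOnBall F' q 0 1 → HasSum (fun n => q.coeff n * z ^ n) (F' z) := by
    intro F' q hq
    have h := hq.hasSum hzball
    rw [zero_add] at h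
    have e : (fun n : ℕ => q n fun _ => z) = fun n : ℕ => q.coeff n * z ^ n := by
      funext n
      rw [FormalMultilinearSeries.apply_eq_pow_smul_coeff, smul_eq_mul]
      ring
    rwa [e] at h
  have hD1 := key _ p1 hp1
  have hD2 := key _ p2 hp2
  have hD3 := key _ p3 hp3
  have hit2 : deriv (deriv f) z = iteratedDeriv 2 f z := by
    rw [iteratedDeriv_succ, iteratedDeriv_one]
  have hit3 : deriv (deriv (deriv f)) z = iteratedDeriv 3 f z := by
    rw [iteratedDeriv_succ, iteratedDeriv_succ, iteratedDeriv_one]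
  rw [hit2] at hD2
  rw [hit3] at hD3
  set C3 : ℂ := (l : ℂ) * m with hC3def
  set C2 : ℂ := (l : ℂ) - m + 2 * l * m with hC2def
  -- three HasSum facts, re-indexed
  have H1 : HasSum (fun n : ℕ => (n : ℂ) * a n * z ^ n) (z * deriv f z) := by
    have h' := hD1.mul_left z
    have e : (fun n : ℕ => z * (p1.coeff n * z ^ n))
        = fun n : ℕ => ((fun j : ℕ => (j : ℂ) * a j * z ^ j) (n + 1)) := by
      funext n; rw [hc1, hp0c]; push_cast; ring
    rw [e] at h'
    have h'' := (hasSum_nat_add_iff (f := fun j : ℕ => (j : ℂ) * a j * z ^ j) 1).1 h'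
    simpa using h''
  have H2 : HasSum (fun n : ℕ => C2 * ((n : ℂ) * ((n : ℂ) - 1) * a n * z ^ n))
      (C2 * z ^ 2 * iteratedDeriv 2 f z) := by
    have h' := hD2.mul_left (C2 * z ^ 2)
    have e : (fun n : ℕ => (C2 * z ^ 2) * (p2.coeff n * z ^ n))
        = fun n : ℕ => ((fun j : ℕ => C2 * ((j : ℂ) * ((j : ℂ) - 1) * a j * z ^ j)) (n + 2)) := by
      funext n; rw [hc2, hc1, hp0c]; push_cast; ring
    rw [e] at h'
    have h'' := (hasSum_nat_add_iff
      (f := fun j : ℕ => C2 * ((j : ℂ) * ((j : ℂ) - 1) * a j * z ^ j)) 2).1 h'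
    have e2 : ∑ i ∈ Finset.range 2, C2 * ((i : ℂ) * ((i : ℂ) - 1) * a i * z ^ i) = 0 := by
      norm_num [Finset.sum_range_succ]
    rw [e2, add_zero] at h''
    exact h''
  have H3 : HasSum (fun n : ℕ => C3 * ((n : ℂ) * ((n : ℂ) - 1) * ((n : ℂ) - 2) * a n * z ^ n))
      (C3 * z ^ 3 * iteratedDeriv 3 f z) := by
    have h' := hD3.mul_left (C3 * z ^ 3)
    have e : (fun n : ℕ => (C3 * z ^ 3) * (p3.coeff n * z ^ n))
        = fun n : ℕ => ((fun j : ℕ => C3 * ((j : ℂ) * ((j : ℂ) - 1) * ((j : ℂ) - 2) * a j * z ^ j)) (n + 3)) := by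
      funext n; rw [hc3, hc2, hc1, hp0c]; push_cast; ring
    rw [e] at h'
    have h'' := (hasSum_nat_add_iff
      (f := fun j : ℕ => C3 * ((j : ℂ) * ((j : ℂ) - 1) * ((j : ℂ) - 2) * a j * z ^ j)) 3).1 h'
    have e2 : ∑ i ∈ Finset.range 3, C3 * ((i : ℂ) * ((i : ℂ) - 1) * ((i : ℂ) - 2) * a i * z ^ i) = 0 := by
      norm_num [Finset.sum_range_succ]
    rw [e2, add_zero] at h''
    exact h''
  have HF : HasSum (fun n : ℕ => ((cc l m n : ℝ) : ℂ) * a n * z ^ n)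
      (z * deriv f z + z ^ 2 * iteratedDeriv 2 f z * C2 + C3 * z ^ 3 * iteratedDeriv 3 f z) := by
    have h' := (H1.add H2).add H3
    have e : (fun n : ℕ => ((n : ℂ) * a n * z ^ n + C2 * ((n : ℂ) * ((n : ℂ) - 1) * a n * z ^ n))
          + C3 * ((n : ℂ) * ((n : ℂ) - 1) * ((n : ℂ) - 2) * a n * z ^ n))
        = fun n : ℕ => ((cc l m n : ℝ) : ℂ) * a n * z ^ n := by
      funext n
      simp only [cc, hC2def, hC3def]
      push_cast
      ring
    rw [e] at h'
    have e2 : z * deriv f z + C2 * z ^ 2 * iteratedDeriv 2 f z + C3 * z ^ 3 * iteratedDeriv 3 f z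
        = z * deriv f z + z ^ 2 * iteratedDeriv 2 f z * C2 + C3 * z ^ 3 * iteratedDeriv 3 f z := by
      ring
    rwa [e2] at h'
  have HG : HasSum (fun n : ℕ => Bc n * z ^ n) (G z) := by
    have hs : Summable (fun n : ℕ => Bc n * z ^ n) := by
      refine Summable.of_norm (Summable.of_nonneg_of_le (fun n => norm_nonneg _) (fun n => ?_) hsumB)
      rw [norm_mul, norm_pow]
      exact mul_le_of_le_one_right (norm_nonneg _) (pow_le_one₀ (norm_nonneg z) hzlt.le)
    have h := hs.hasSum
    rwa [← hBcs z hz] at h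
  set Fz := z * deriv f z + z ^ 2 * iteratedDeriv 2 f z * C2 + C3 * z ^ 3 * iteratedDeriv 3 f z
    with hFzdef
  have HFG : HasSum (fun n : ℕ => (((cc l m n : ℝ) : ℂ) * a n - Bc n) * z ^ n) (Fz - G z) := by
    have h' := HF.sub HG
    have e : (fun n : ℕ => ((cc l m n : ℝ) : ℂ) * a n * z ^ n - Bc n * z ^ n)
        = fun n : ℕ => (((cc l m n : ℝ) : ℂ) * a n - Bc n) * z ^ n := by
      funext n; ring
    rwa [e] at h'
  have HAB : HasSum (fun n : ℕ => ((A : ℂ) * Bc n - (B : ℂ) * (((cc l m n : ℝ) : ℂ) * a n)) * z ^ n)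
      ((A : ℂ) * G z - (B : ℂ) * Fz) := by
    have h' := (HG.mul_left (A : ℂ)).sub (HF.mul_left (B : ℂ))
    have e : (fun n : ℕ => (A : ℂ) * (Bc n * z ^ n) - (B : ℂ) * (((cc l m n : ℝ) : ℂ) * a n * z ^ n))
        = fun n : ℕ => ((A : ℂ) * Bc n - (B : ℂ) * (((cc l m n : ℝ) : ℂ) * a n)) * z ^ n := by
      funext n; ring
    rwa [e] at h'
  have HFG2 : HasSum
      (fun n : ℕ => (((cc l m (n + 2) : ℝ) : ℂ) * a (n + 2) - Bc (n + 2)) * z ^ (n + 2))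
      (Fz - G z) := by
    have h' := (hasSum_nat_add_iff'
      (f := fun j : ℕ => (((cc l m j : ℝ) : ℂ) * a j - Bc j) * z ^ j) 2).2 HFG
    have e2 : ∑ i ∈ Finset.range 2, (((cc l m i : ℝ) : ℂ) * a i - Bc i) * z ^ i = 0 := by
      norm_num [Finset.sum_range_succ, ha0, hBc0, ha1, hBc1, cc]
    rw [e2, sub_zero] at h'
    exact h'
  have HAB2 : HasSum
      (fun n : ℕ => ((A : ℂ) * Bc (n + 2) - (B : ℂ) * (((cc l m (n + 2) : ℝ) : ℂ) * a (n + 2))) * z ^ (n + 2))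
      ((A : ℂ) * G z - (B : ℂ) * Fz - ((A : ℂ) - B) * z) := by
    have h' := (hasSum_nat_add_iff'
      (f := fun j : ℕ => ((A : ℂ) * Bc j - (B : ℂ) * (((cc l m j : ℝ) : ℂ) * a j)) * z ^ j) 2).2 HAB
    have e2 : ∑ i ∈ Finset.range 2,
        ((A : ℂ) * Bc i - (B : ℂ) * (((cc l m i : ℝ) : ℂ) * a i)) * z ^ i = ((A : ℂ) - B) * z := by
      norm_num [Finset.sum_range_succ, ha0, hBc0, ha1, hBc1, cc]
    rw [e2] at h'
    exact h'
  -- norm bounds for the tails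
  have hub : ∀ n : ℕ, ‖(((cc l m (n + 2) : ℝ) : ℂ) * a (n + 2) - Bc (n + 2)) * z ^ (n + 2)‖
      ≤ (cc l m (n + 2) * ‖a (n + 2)‖ + ‖Bc (n + 2)‖) * ‖z‖ ^ 2 := by
    intro n
    rw [norm_mul, norm_pow]
    have h1 : ‖((cc l m (n + 2) : ℝ) : ℂ) * a (n + 2) - Bc (n + 2)‖
        ≤ cc l m (n + 2) * ‖a (n + 2)‖ + ‖Bc (n + 2)‖ := by
      refine (norm_sub_le _ _).trans ?_
      rw [norm_mul, Complex.norm_real, Real.norm_eq_abs, _root_.abs_of_nonneg (hcc0 n)]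
    have h2 : ‖z‖ ^ (n + 2) ≤ ‖z‖ ^ 2 :=
      pow_le_pow_of_le_one (norm_nonneg z) hzlt.le (by omega)
    exact mul_le_mul h1 h2 (pow_nonneg (norm_nonneg z) _)
      (add_nonneg (mul_nonneg (hcc0 n) (norm_nonneg _)) (norm_nonneg _))
  have hub2 : ∀ n : ℕ,
      ‖((A : ℂ) * Bc (n + 2) - (B : ℂ) * (((cc l m (n + 2) : ℝ) : ℂ) * a (n + 2))) * z ^ (n + 2)‖
      ≤ (|A| * ‖Bc (n + 2)‖ + |B| * (cc l m (n + 2) * ‖a (n + 2)‖)) * ‖z‖ ^ 2 := by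
    intro n
    rw [norm_mul, norm_pow]
    have h1 : ‖(A : ℂ) * Bc (n + 2) - (B : ℂ) * (((cc l m (n + 2) : ℝ) : ℂ) * a (n + 2))‖
        ≤ |A| * ‖Bc (n + 2)‖ + |B| * (cc l m (n + 2) * ‖a (n + 2)‖) := by
      refine (norm_sub_le _ _).trans ?_
      rw [norm_mul, norm_mul, norm_mul, Complex.norm_real, Complex.norm_real,
        Complex.norm_real, Real.norm_eq_abs, Real.norm_eq_abs, Real.norm_eq_abs,
        _root_.abs_of_nonneg (hcc0 n)]
    have h2 : ‖z‖ ^ (n + 2) ≤ ‖z‖ ^ 2 :=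
      pow_le_pow_of_le_one (norm_nonneg z) hzlt.le (by omega)
    refine mul_le_mul h1 h2 (pow_nonneg (norm_nonneg z) _) ?_
    exact add_nonneg (mul_nonneg (abs_nonneg A) (norm_nonneg _))
      (mul_nonneg (abs_nonneg B) (mul_nonneg (hcc0 n) (norm_nonneg _)))
  have hu1sum : Summable (fun n : ℕ => (cc l m (n + 2) * ‖a (n + 2)‖ + ‖Bc (n + 2)‖) * ‖z‖ ^ 2) :=
    (hsa'.add hsB).mul_right _
  have hu2sum : Summable
      (fun n : ℕ => (|A| * ‖Bc (n + 2)‖ + |B| * (cc l m (n + 2) * ‖a (n + 2)‖)) * ‖z‖ ^ 2) :=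
    ((hsB.mul_left _).add (hsa'.mul_left _)).mul_right _
  have hn1sum : Summable (fun n : ℕ =>
      ‖(((cc l m (n + 2) : ℝ) : ℂ) * a (n + 2) - Bc (n + 2)) * z ^ (n + 2)‖) :=
    Summable.of_nonneg_of_le (fun n => norm_nonneg _) hub hu1sum
  have hn2sum : Summable (fun n : ℕ =>
      ‖((A : ℂ) * Bc (n + 2) - (B : ℂ) * (((cc l m (n + 2) : ℝ) : ℂ) * a (n + 2))) * z ^ (n + 2)‖) :=
    Summable.of_nonneg_of_le (fun n => norm_nonneg _) hub2 hu2sum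
  have hFGle : ‖Fz - G z‖ ≤ (Sa + SB) * ‖z‖ ^ 2 := by
    calc ‖Fz - G z‖
        = ‖∑' n : ℕ, (((cc l m (n + 2) : ℝ) : ℂ) * a (n + 2) - Bc (n + 2)) * z ^ (n + 2)‖ := by
          rw [HFG2.tsum_eq]
      _ ≤ ∑' n : ℕ, ‖(((cc l m (n + 2) : ℝ) : ℂ) * a (n + 2) - Bc (n + 2)) * z ^ (n + 2)‖ :=
          norm_tsum_le_tsum_norm hn1sum
      _ ≤ ∑' n : ℕ, (cc l m (n + 2) * ‖a (n + 2)‖ + ‖Bc (n + 2)‖) * ‖z‖ ^ 2 :=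
          Summable.tsum_le_tsum hub hn1sum hu1sum
      _ = (Sa + SB) * ‖z‖ ^ 2 := by
          rw [tsum_mul_right, Summable.tsum_add hsa' hsB]
  have hTle : ‖(A : ℂ) * G z - (B : ℂ) * Fz - ((A : ℂ) - B) * z‖
      ≤ (|A| * SB + |B| * Sa) * ‖z‖ ^ 2 := by
    calc ‖(A : ℂ) * G z - (B : ℂ) * Fz - ((A : ℂ) - B) * z‖
        = ‖∑' n : ℕ, ((A : ℂ) * Bc (n + 2) - (B : ℂ) * (((cc l m (n + 2) : ℝ) : ℂ) * a (n + 2))) * z ^ (n + 2)‖ := by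
          rw [HAB2.tsum_eq]
      _ ≤ ∑' n : ℕ, ‖((A : ℂ) * Bc (n + 2) - (B : ℂ) * (((cc l m (n + 2) : ℝ) : ℂ) * a (n + 2))) * z ^ (n + 2)‖ :=
          norm_tsum_le_tsum_norm hn2sum
      _ ≤ ∑' n : ℕ, (|A| * ‖Bc (n + 2)‖ + |B| * (cc l m (n + 2) * ‖a (n + 2)‖)) * ‖z‖ ^ 2 :=
          Summable.tsum_le_tsum hub2 hn2sum hu2sum
      _ = (|A| * SB + |B| * Sa) * ‖z‖ ^ 2 := by
          rw [tsum_mul_right, Summable.tsum_add (hsB.mul_left _) (hsa'.mul_left _), tsum_mul_left,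
            tsum_mul_left]
  have hABge : (A - B) * ‖z‖ - (|A| * SB + |B| * Sa) * ‖z‖ ^ 2
      ≤ ‖(A : ℂ) * G z - (B : ℂ) * Fz‖ := by
    have h1 : ‖((A : ℂ) - B) * z‖ = (A - B) * ‖z‖ := by
      have e : ((A : ℂ) - (B : ℂ)) = ((A - B : ℝ) : ℂ) := by push_cast; ring
      rw [norm_mul, e, Complex.norm_real, Real.norm_eq_abs, _root_.abs_of_pos (sub_pos.2 hBA)]
    have h2 : ‖((A : ℂ) - B) * z‖ ≤ ‖(A : ℂ) * G z - (B : ℂ) * Fz‖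
        + ‖(A : ℂ) * G z - (B : ℂ) * Fz - ((A : ℂ) - B) * z‖ := by
      have h3 := norm_sub_le ((A : ℂ) * G z - (B : ℂ) * Fz)
        ((A : ℂ) * G z - (B : ℂ) * Fz - ((A : ℂ) - B) * z)
      have e : (A : ℂ) * G z - (B : ℂ) * Fz
          - ((A : ℂ) * G z - (B : ℂ) * Fz - ((A : ℂ) - B) * z) = ((A : ℂ) - B) * z := by ring
      rwa [e] at h3
    rw [h1] at h2
    linarith [hTle, h2]
  have hr2 : ‖z‖ ^ 2 * ((1 + |B|) * Sa + (1 + |A|) * SB) ≤ ‖z‖ ^ 2 * (A - B) :=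
    mul_le_mul_of_nonneg_left hineq' (by positivity)
  have hr3 : ‖z‖ ^ 2 * (A - B) < ‖z‖ * (A - B) := by
    have h4 : ‖z‖ ^ 2 < ‖z‖ := by nlinarith
    exact mul_lt_mul_of_pos_right h4 (sub_pos.2 hBA)
  nlinarith [hFGle, hABge, hr2, hr3]
end
end

section
/- Let -1 ≤ B < A ≤ 1 and let f(z) = z + ∑_{n≥2} a_n z^n be normalized analytic on U. With B_n the coefficients of G_k(z) = g_k(z)/z^{k-1} for g starlike of order (k-1)/k, if (1+|B|) ∑_{n≥2} n|a_n| + (1+|A|) ∑_{n≥2} |B_n| ≤ A - B, then |z f'(z) - G_k(z)| < |A·G_k(z) - B z f'(z)| for all z ∈ U, i.e. z f'(z)/G_k(z) is subordinate to (1+Az)/(1+Bz). -/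
open Complex MeasureTheory

noncomputable section

/-- Splitting off the first two terms of a power series with `c 0 = 0`, `c 1 = 1`. -/
private lemma aux_split (c : ℕ → ℂ) (z : ℂ) (h0 : c 0 = 0) (h1 : c 1 = 1)
    (hs : Summable fun n : ℕ => c n * z ^ n) :
    ∑' n : ℕ, c n * z ^ n = z + ∑' n : ℕ, c (n + 2) * z ^ (n + 2) := by
  rw [Summable.tsum_eq_zero_add hs, Summable.tsum_eq_zero_add ((summable_nat_add_iff 1).2 hs)]
  simp [h0, h1]

/-- Bound on a tail series. -/
private lemma aux_tail (c : ℕ → ℂ) (u : ℕ → ℝ) (z : ℂ) (hz : ‖z‖ < 1) (hu : Summable u)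
    (hb : ∀ n, ‖c n‖ ≤ u n) :
    ‖∑' n : ℕ, c n * z ^ (n + 2)‖ ≤ ‖z‖ ^ 2 * ∑' n, u n := by
  have hbb : ∀ n : ℕ, ‖c n * z ^ (n + 2)‖ ≤ u n * ‖z‖ ^ 2 := by
    intro n
    rw [norm_mul, norm_pow]
    have h1 : ‖z‖ ^ (n + 2) ≤ ‖z‖ ^ 2 := by
      rw [pow_add]
      have : ‖z‖ ^ n ≤ 1 := pow_le_one₀ (norm_nonneg z) hz.le
      nlinarith [pow_nonneg (norm_nonneg z) 2, pow_nonneg (norm_nonneg z) n]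
    have h2 : (0:ℝ) ≤ u n := le_trans (norm_nonneg _) (hb n)
    exact mul_le_mul (hb n) h1 (by positivity) h2
  have hsn : Summable fun n : ℕ => ‖c n * z ^ (n + 2)‖ :=
    Summable.of_nonneg_of_le (fun n => norm_nonneg _) hbb (hu.mul_right _)
  calc ‖∑' n : ℕ, c n * z ^ (n + 2)‖ ≤ ∑' n, ‖c n * z ^ (n + 2)‖ := norm_tsum_le_tsum_norm hsn
    _ ≤ ∑' n, u n * ‖z‖ ^ 2 := Summable.tsum_le_tsum hbb hsn (hu.mul_right _)
    _ = ‖z‖ ^ 2 * ∑' n, u n := by rw [tsum_mul_right]; ring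

/-- Derivative of a power series with coefficients dominated by a summable sequence. -/
private lemma aux_deriv (a : ℕ → ℂ) (ha0 : a 0 = 0)
    (hna : Summable fun n : ℕ => (n : ℝ) * ‖a n‖) (z : ℂ) (hz : z ∈ Metric.ball (0:ℂ) 1) :
    HasDerivAt (fun w => ∑' n : ℕ, a n * w ^ n)
      (∑' n : ℕ, a n * ((n:ℂ) * z ^ (n-1))) z := by
  have hsum0 : Summable fun n : ℕ => a n * (0:ℂ) ^ n := by
    apply summable_of_ne_finset_zero (s := {0})
    intro n hn
    simp at hn
    simp [zero_pow hn]
  refine hasDerivAt_tsum_of_isPreconnected hna Metric.isOpen_ball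
    (convex_ball (0:ℂ) 1).isPreconnected
    (fun n y _ => (hasDerivAt_pow n y).const_mul (a n)) ?_
    (Metric.mem_ball_self one_pos) hsum0 hz
  intro n y hy
  rw [mem_ball_zero_iff] at hy
  rw [norm_mul, norm_mul, norm_pow]
  have h1 : ‖y‖ ^ (n - 1) ≤ 1 := pow_le_one₀ (norm_nonneg y) hy.le
  have h2 : ‖(n:ℂ)‖ = (n:ℝ) := by simp
  rw [h2]
  have hn0 : (0:ℝ) ≤ (n:ℝ) := by positivity
  calc ‖a n‖ * ((n:ℝ) * ‖y‖ ^ (n-1)) ≤ ‖a n‖ * ((n:ℝ) * 1) :=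
        mul_le_mul_of_nonneg_left (mul_le_mul_of_nonneg_left h1 hn0) (norm_nonneg _)
    _ = (n:ℝ) * ‖a n‖ := by ring

theorem stmt11 (k : ℕ) (hk : 1 ≤ k) (A B : ℝ)
    (hB : -1 ≤ B) (hBA : B < A) (hA : A ≤ 1)
    (f : ℂ → ℂ) (a : ℕ → ℂ) (hf : AnalyticOn ℂ f unitDisk)
    (ha : ∀ z ∈ unitDisk, f z = ∑' n : ℕ, a n * z ^ n) (ha0 : a 0 = 0) (ha1 : a 1 = 1)
    (g : ℂ → ℂ) (hg : AnalyticOn ℂ g unitDisk) (hgn : Normalized g)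
    (hgs : StarlikeOfOrder ((k - 1 : ℝ) / k) g)
    (G : ℂ → ℂ) (Bc : ℕ → ℂ) (hG : AnalyticOn ℂ G unitDisk)
    (hGk : ∀ z ∈ unitDisk, z ≠ 0 → G z = gk k g z / z ^ (k - 1))
    (hBcs : ∀ z ∈ unitDisk, G z = ∑' n : ℕ, Bc n * z ^ n) (hBc0 : Bc 0 = 0) (hBc1 : Bc 1 = 1)
    (hsa : Summable (fun n : ℕ => ((n + 2 : ℝ)) * ‖a (n + 2)‖))
    (hsB : Summable (fun n : ℕ => ‖Bc (n + 2)‖))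
    (hineq : (1 + |B|) * (∑' n : ℕ, ((n + 2 : ℝ)) * ‖a (n + 2)‖)
        + (1 + |A|) * (∑' n : ℕ, ‖Bc (n + 2)‖) ≤ A - B) :
    ∀ z ∈ unitDisk, z ≠ 0 →
      ‖z * deriv f z - G z‖ < ‖(A : ℂ) * G z - (B : ℂ) * (z * deriv f z)‖ := by
  -- summability transfers
  have hna : Summable (fun n : ℕ => (n : ℝ) * ‖a n‖) := by
    refine (summable_nat_add_iff 2).1 ?_
    convert hsa using 2 with n
    · rfl
    · push_cast; ring
  have hnB : Summable (fun n : ℕ => ‖Bc n‖) := (summable_nat_add_iff 2).1 hsB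
  intro z hz hz0
  have hz1 : ‖z‖ < 1 := mem_ball_zero_iff.1 hz
  have hzpos : 0 < ‖z‖ := norm_pos_iff.2 hz0
  -- derivative of f at z
  have hF := aux_deriv a ha0 hna z hz
  have hfF : deriv f z = ∑' n : ℕ, a n * ((n:ℂ) * z ^ (n-1)) := by
    have heq : f =ᶠ[nhds z] (fun w => ∑' n : ℕ, a n * w ^ n) :=
      Filter.eventuallyEq_of_mem (Metric.isOpen_ball.mem_nhds hz) (fun y hy => ha y hy)
    rw [heq.deriv_eq, hF.deriv]
  -- z * f'(z) as a power series
  have hzf : z * deriv f z = ∑' n : ℕ, (n : ℂ) * a n * z ^ n := by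
    rw [hfF, ← tsum_mul_left]
    congr 1; funext n
    rcases n with _ | m
    · simp
    · have : m + 1 - 1 = m := rfl
      rw [this, pow_succ]
      push_cast; ring
  -- summability of the two coefficient series at z
  have hsumA : Summable fun n : ℕ => (n : ℂ) * a n * z ^ n := by
    refine Summable.of_norm_bounded hna fun n => ?_
    rw [norm_mul, norm_mul, norm_pow]
    have h1 : ‖z‖ ^ n ≤ 1 := pow_le_one₀ (norm_nonneg z) hz1.le
    have h2 : ‖(n:ℂ)‖ = (n:ℝ) := by simp
    rw [h2]
    have hn0 : (0:ℝ) ≤ (n:ℝ) * ‖a n‖ := by positivity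
    nlinarith
  have hsumB : Summable fun n : ℕ => Bc n * z ^ n := by
    refine Summable.of_norm_bounded hnB fun n => ?_
    rw [norm_mul, norm_pow]
    have h1 : ‖z‖ ^ n ≤ 1 := pow_le_one₀ (norm_nonneg z) hz1.le
    nlinarith [norm_nonneg (Bc n)]
  -- tail decompositions
  set S1 := ∑' n : ℕ, ((n + 2 : ℝ)) * ‖a (n + 2)‖ with hS1def
  set S2 := ∑' n : ℕ, ‖Bc (n + 2)‖ with hS2def
  set Tf := ∑' n : ℕ, ((n + 2 : ℕ) : ℂ) * a (n + 2) * z ^ (n + 2) with hTfdef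
  set Tg := ∑' n : ℕ, Bc (n + 2) * z ^ (n + 2) with hTgdef
  have hzfeq : z * deriv f z = z + Tf := by
    rw [hzf, aux_split (fun n => (n : ℂ) * a n) z (by simp) (by simp [ha1]) hsumA]
  have hGeq : G z = z + Tg := by
    rw [hBcs z hz, aux_split Bc z hBc0 hBc1 hsumB]
  -- tail bounds
  have hTf : ‖Tf‖ ≤ ‖z‖ ^ 2 * S1 := by
    refine aux_tail _ _ z hz1 hsa fun n => ?_
    rw [norm_mul]
    have : ‖((n + 2 : ℕ) : ℂ)‖ = ((n : ℝ) + 2) := by rw [Complex.norm_natCast]; push_cast; ring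
    rw [this]
  have hTg : ‖Tg‖ ≤ ‖z‖ ^ 2 * S2 := aux_tail _ _ z hz1 hsB fun n => le_refl _
  have hS1 : 0 ≤ S1 := tsum_nonneg fun n => by positivity
  have hS2 : 0 ≤ S2 := tsum_nonneg fun n => norm_nonneg _
  rw [hzfeq, hGeq]
  -- upper bound for the LHS
  have hD : ‖(z + Tf) - (z + Tg)‖ ≤ ‖Tf‖ + ‖Tg‖ := by
    have h : (z + Tf) - (z + Tg) = Tf - Tg := by ring
    rw [h]; exact norm_sub_le _ _
  -- lower bound for the RHS
  have hE : (A - B) * ‖z‖ - (|A| * ‖Tg‖ + |B| * ‖Tf‖)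
      ≤ ‖(A:ℂ) * (z + Tg) - (B:ℂ) * (z + Tf)‖ := by
    have heq : (A:ℂ) * (z + Tg) - (B:ℂ) * (z + Tf)
        = ((A:ℂ) - B) * z + ((A:ℂ) * Tg - (B:ℂ) * Tf) := by ring
    rw [heq]
    have h1 : ‖((A:ℂ) - B) * z‖ = (A - B) * ‖z‖ := by
      rw [norm_mul, show ((A:ℂ) - B) = ((A - B : ℝ) : ℂ) by push_cast; ring,
        Complex.norm_real, Real.norm_eq_abs, abs_of_pos (by linarith)]
    have h2 : ‖(A:ℂ) * Tg - (B:ℂ) * Tf‖ ≤ |A| * ‖Tg‖ + |B| * ‖Tf‖ := by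
      calc ‖(A:ℂ) * Tg - (B:ℂ) * Tf‖ ≤ ‖(A:ℂ) * Tg‖ + ‖(B:ℂ) * Tf‖ := norm_sub_le _ _
        _ = |A| * ‖Tg‖ + |B| * ‖Tf‖ := by
            rw [norm_mul, norm_mul, Complex.norm_real, Complex.norm_real,
              Real.norm_eq_abs, Real.norm_eq_abs]
    have h3 : ‖((A:ℂ) - B) * z‖ - ‖(A:ℂ) * Tg - (B:ℂ) * Tf‖
        ≤ ‖((A:ℂ) - B) * z + ((A:ℂ) * Tg - (B:ℂ) * Tf)‖ := by
      have h4 : ‖((A:ℂ) - B) * z‖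
          ≤ ‖((A:ℂ) - B) * z + ((A:ℂ) * Tg - (B:ℂ) * Tf)‖ + ‖(A:ℂ) * Tg - (B:ℂ) * Tf‖ := by
        calc ‖((A:ℂ) - B) * z‖
            = ‖(((A:ℂ) - B) * z + ((A:ℂ) * Tg - (B:ℂ) * Tf)) - ((A:ℂ) * Tg - (B:ℂ) * Tf)‖ := by
              congr 1; ring
          _ ≤ _ := norm_sub_le _ _
      linarith
    linarith
  -- final arithmetic
  have hr2 : ‖z‖ ^ 2 < ‖z‖ := by nlinarith
  have hc4 : |A| * ‖Tg‖ ≤ |A| * (‖z‖ ^ 2 * S2) := mul_le_mul_of_nonneg_left hTg (abs_nonneg A)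
  have hc5 : |B| * ‖Tf‖ ≤ |B| * (‖z‖ ^ 2 * S1) := mul_le_mul_of_nonneg_left hTf (abs_nonneg B)
  have hc6 : ‖z‖ ^ 2 * ((1 + |B|) * S1 + (1 + |A|) * S2) ≤ ‖z‖ ^ 2 * (A - B) :=
    mul_le_mul_of_nonneg_left hineq (sq_nonneg ‖z‖)
  have hc7 : ‖z‖ ^ 2 * (A - B) < ‖z‖ * (A - B) :=
    mul_lt_mul_of_pos_right hr2 (by linarith)
  nlinarith [hD, hE, hTf, hTg, hc4, hc5, hc6, hc7]

end
end

section
/- If g is normalized analytic on U and starlike with respect to symmetric points, i.e. Re(z g'(z)/(g(z) - g(-z))) > 0 for all nonzero z ∈ U, then the odd function h(z) = (g(z) - g(-z))/2 is starlike on U. -/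
open Complex MeasureTheory

noncomputable section

theorem stmt14 (g : ℂ → ℂ) (hg : AnalyticOn ℂ g unitDisk) (hn : Normalized g)
    (hs : ∀ z ∈ unitDisk, z ≠ 0 → 0 < (z * deriv g z / (g z - g (-z))).re) :
    Starlike (fun z => (g z - g (-z)) / 2) := by
  intro z hz hz0
  have hz' : -z ∈ unitDisk := by
    simpa [unitDisk, Metric.mem_ball] using hz
  have hopen : unitDisk ∈ nhds z := (Metric.isOpen_ball).mem_nhds hz
  have hopen' : unitDisk ∈ nhds (-z) := (Metric.isOpen_ball).mem_nhds hz'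
  have hgn : AnalyticOnNhd ℂ g unitDisk :=
    (Metric.isOpen_ball.analyticOn_iff_analyticOnNhd).mp hg
  have ha : AnalyticAt ℂ g z := hgn z hz
  have ha' : AnalyticAt ℂ g (-z) := hgn (-z) hz'
  have hd1 : HasDerivAt g (deriv g z) z := ha.differentiableAt.hasDerivAt
  have hd2 : HasDerivAt (fun w => g (-w)) (deriv g (-z) * (-1)) z :=
    (ha'.differentiableAt.hasDerivAt).comp z (hasDerivAt_neg z)
  have hd : HasDerivAt (fun w => (g w - g (-w)) / 2)
      ((deriv g z + deriv g (-z)) / 2) z := by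
    have := (hd1.sub hd2).div_const 2
    refine this.congr_deriv ?_
    ring
  have hder : deriv (fun w => (g w - g (-w)) / 2) z = (deriv g z + deriv g (-z)) / 2 :=
    hd.deriv
  have h1 := hs z hz hz0
  have h2 := hs (-z) hz' (neg_ne_zero.mpr hz0)
  have hD : g z - g (-z) ≠ 0 := by
    intro h
    rw [h] at h1
    simp at h1
  have h2' : 0 < (z * deriv g (-z) / (g z - g (-z))).re := by
    have : (-z) * deriv g (-z) / (g (-z) - g (-(-z))) =
        z * deriv g (-z) / (g z - g (-z)) := by
      rw [neg_neg]
      rw [show g (-z) - g z = -(g z - g (-z)) by ring]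
      rw [div_neg, neg_mul, neg_div, neg_neg]
    rwa [this] at h2
  have key : z * deriv (fun w => (g w - g (-w)) / 2) z / ((g z - g (-z)) / 2) =
      z * deriv g z / (g z - g (-z)) + z * deriv g (-z) / (g z - g (-z)) := by
    rw [hder]
    field_simp
  rw [key, Complex.add_re]
  exact add_pos h1 h2'
end
end

section
/- Every normalized convex function f on U is starlike of order 1/2, i.e. if f is analytic, normalized, and Re(1 + z f''(z)/f'(z)) > 0 on U, then Re(z f'(z)/f(z)) > 1/2 for all nonzero z ∈ U. Moreover the converse fails: the function f(z) = z - z^2/3 is starlike of order 1/2 on U but not convex. -/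
open Complex MeasureTheory

noncomputable section

namespace MS
open Metric Filter Set Topology

lemma hasDerivAt_normSq_comp {u : ℝ → ℂ} {u' : ℂ} {t : ℝ} (hu : HasDerivAt u u' t) :
    HasDerivAt (fun s => Complex.normSq (u s)) (2 * (u' * (starRingEnd ℂ) (u t)).re) t := by
  have hre : HasDerivAt (fun s => (u s).re) u'.re t := by
    simpa [Function.comp_def] using (Complex.reCLM.hasFDerivAt.comp_hasDerivAt t hu)
  have him : HasDerivAt (fun s => (u s).im) u'.im t := by
    simpa [Function.comp_def] using (Complex.imCLM.hasFDerivAt.comp_hasDerivAt t hu)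
  have := (hre.mul hre).add (him.mul him)
  have h2 : 2 * (u' * (starRingEnd ℂ) (u t)).re
      = u'.re * (u t).re + (u t).re * u'.re + (u'.im * (u t).im + (u t).im * u'.im) := by
    simp [Complex.mul_re, Complex.conj_re, Complex.conj_im]; ring
  rw [h2]; exact this

lemma jack {w : ℂ → ℂ} (hw : ∀ z ∈ ball (0:ℂ) 1, AnalyticAt ℂ w z) (hw0 : w 0 = 0)
    {z₁ : ℂ} (hz₁U : z₁ ∈ ball (0:ℂ) 1) (hz₁ : 1 ≤ ‖w z₁‖) :
    ∃ z₀ ∈ ball (0:ℂ) 1, z₀ ≠ 0 ∧ ‖w z₀‖ = 1 ∧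
      ∃ k : ℝ, 1 ≤ k ∧ z₀ * deriv w z₀ = (k : ℂ) * w z₀ := by
  have hr₁ : ‖z₁‖ < 1 := mem_ball_zero_iff.mp hz₁U
  set K := Metric.closedBall (0:ℂ) ‖z₁‖ with hKdef
  have hKU : K ⊆ ball (0:ℂ) 1 := closedBall_subset_ball hr₁
  have hKc : IsCompact K := isCompact_closedBall _ _
  have hwcont : ContinuousOn w K := fun z hz => ((hw z (hKU hz)).continuousAt).continuousWithinAt
  set S := K ∩ (fun z => ‖w z‖) ⁻¹' (Set.Ici 1) with hSdef
  have hScl : IsClosed S :=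
    (continuous_norm.comp_continuousOn hwcont).preimage_isClosed_of_isClosed
      Metric.isClosed_closedBall isClosed_Ici
  have hz₁S : z₁ ∈ S := ⟨mem_closedBall_zero_iff.mpr le_rfl, hz₁⟩
  have hSc : IsCompact S := hKc.of_isClosed_subset hScl inter_subset_left
  obtain ⟨z₀, hz₀S, hmin⟩ := hSc.exists_isMinOn ⟨z₁, hz₁S⟩ continuous_norm.continuousOn
  have hz₀U : z₀ ∈ ball (0:ℂ) 1 := hKU hz₀S.1
  have hz₀w : 1 ≤ ‖w z₀‖ := hz₀S.2
  have hz₀ne : z₀ ≠ 0 := by rintro rfl; rw [hw0] at hz₀w; simp at hz₀w; linarith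
  have hr₀ : 0 < ‖z₀‖ := norm_pos_iff.mpr hz₀ne
  have hr₀1 : ‖z₀‖ < 1 := lt_of_le_of_lt (mem_closedBall_zero_iff.mp hz₀S.1) hr₁
  have claim1 : ∀ z : ℂ, ‖z‖ < ‖z₀‖ → ‖w z‖ < 1 := by
    intro z hz
    by_contra h; push_neg at h
    have hzS : z ∈ S :=
      ⟨mem_closedBall_zero_iff.mpr (le_of_lt (lt_of_lt_of_le hz (mem_closedBall_zero_iff.mp hz₀S.1))), h⟩
    exact absurd (hmin hzS) (not_le.mpr hz)
  have claim3 : ∀ z : ℂ, ‖z‖ ≤ ‖z₀‖ → ‖w z‖ ≤ 1 := by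
    intro z hz
    by_contra h; push_neg at h
    have hzU : ∀ t : ℝ, t ∈ Set.Icc (0:ℝ) 1 → ((t:ℂ) * z) ∈ ball (0:ℂ) 1 := by
      intro t ht
      rw [mem_ball_zero_iff, norm_mul, Complex.norm_real, Real.norm_eq_abs, _root_.abs_of_nonneg ht.1]
      calc t * ‖z‖ ≤ 1 * ‖z₀‖ := by
            apply mul_le_mul ht.2 hz (norm_nonneg _) zero_le_one
        _ < 1 := by rw [one_mul]; exact hr₀1
    have hcont : ContinuousOn (fun t : ℝ => ‖w ((t:ℂ) * z)‖) (Set.Icc 0 1) := by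
      intro t ht
      have h1 : ContinuousAt (fun s : ℝ => ((s:ℂ) * z)) t :=
        (Complex.continuous_ofReal.continuousAt).mul continuousAt_const
      have h2 : ContinuousAt (fun s : ℝ => w ((s:ℂ) * z)) t :=
        ContinuousAt.comp (g := w) (f := fun s : ℝ => (s:ℂ)*z) (x := t)
          ((hw _ (hzU t ht)).continuousAt) h1
      exact (ContinuousAt.comp (g := fun x : ℂ => ‖x‖) (f := fun s : ℝ => w ((s:ℂ)*z)) (x := t)
        continuous_norm.continuousAt h2).continuousWithinAt
    have hIVT := intermediate_value_Icc (zero_le_one) hcont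
    have h1mem : (1:ℝ) ∈ Set.Icc (‖w (((0:ℝ):ℂ) * z)‖) (‖w (((1:ℝ):ℂ) * z)‖) := by
      constructor
      · simp [hw0]
      · simpa using le_of_lt h
    obtain ⟨t, htI, ht⟩ := hIVT h1mem
    simp only at ht
    have htne : t ≠ 1 := by
      intro h'
      rw [h'] at ht
      rw [show (((1:ℝ):ℂ) * z) = z by simp] at ht
      rw [ht] at h; exact lt_irrefl 1 h
    have htlt : t < 1 := lt_of_le_of_ne htI.2 htne
    have hmem : ‖(t:ℂ) * z‖ < ‖z₀‖ := by
      rw [norm_mul, Complex.norm_real, Real.norm_eq_abs, _root_.abs_of_nonneg htI.1]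
      calc t * ‖z‖ ≤ t * ‖z₀‖ := by
            apply mul_le_mul_of_nonneg_left hz htI.1
        _ < 1 * ‖z₀‖ := by apply mul_lt_mul_of_pos_right htlt hr₀
        _ = ‖z₀‖ := one_mul _
    have := claim1 _ hmem
    rw [ht] at this
    exact lt_irrefl 1 this
  have habs1 : ‖w z₀‖ = 1 := le_antisymm (claim3 z₀ le_rfl) hz₀w
  have hnsq : Complex.normSq (w z₀) = 1 := by
    rw [Complex.normSq_eq_norm_sq, habs1]; norm_num
  -- Schwarz
  have hmaps : Set.MapsTo w (ball (0:ℂ) ‖z₀‖) (ball (w 0) 1) := by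
    intro z hz
    rw [hw0, mem_ball_zero_iff]
    exact claim1 z (mem_ball_zero_iff.mp hz)
  have hdiff : DifferentiableOn ℂ w (ball (0:ℂ) ‖z₀‖) := fun z hz =>
    ((hw z (ball_subset_ball (le_of_lt hr₀1) hz)).differentiableAt).differentiableWithinAt
  have hSch : ∀ z ∈ ball (0:ℂ) ‖z₀‖, ‖w z‖ ≤ ‖z‖ / ‖z₀‖ := by
    intro z hz
    have := Complex.dist_le_div_mul_dist_of_mapsTo_ball hdiff (hmaps.mono_right ball_subset_closedBall) hz
    rw [hw0, dist_zero_right, dist_zero_right] at this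
    calc ‖w z‖ ≤ 1 / ‖z₀‖ * ‖z‖ := this
      _ = ‖z‖ / ‖z₀‖ := by ring
  -- derivative setup
  have hwz₀ : HasDerivAt w (deriv w z₀) z₀ := ((hw z₀ hz₀U).differentiableAt).hasDerivAt
  set w' := deriv w z₀ with hw'def
  set c : ℂ := z₀ * w' * (starRingEnd ℂ) (w z₀) with hcdef
  -- radial direction: c.re ≥ 1
  have hcurve : HasDerivAt (fun t : ℝ => (t:ℂ) * z₀) z₀ 1 := by
    simpa using (Complex.ofRealCLM.hasDerivAt.mul_const z₀)
  have hu1 : HasDerivAt (fun t : ℝ => w ((t:ℂ) * z₀)) (z₀ • w') 1 := by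
    have := hwz₀.scomp_of_eq (1:ℝ) hcurve (by simp)
    simpa [Function.comp_def] using this
  have hψ : HasDerivAt (fun t : ℝ => Complex.normSq (w ((t:ℂ)*z₀)))
      (2 * ((z₀ • w') * (starRingEnd ℂ) (w z₀)).re) 1 := by
    have := hasDerivAt_normSq_comp hu1
    simpa using this
  have hψle : ∀ t : ℝ, t ∈ Set.Ioo (0:ℝ) 1 → Complex.normSq (w ((t:ℂ)*z₀)) ≤ t^2 := by
    intro t ht
    have hmem : (t:ℂ)*z₀ ∈ ball (0:ℂ) ‖z₀‖ := by
      rw [mem_ball_zero_iff, norm_mul, Complex.norm_real, Real.norm_eq_abs, abs_of_pos ht.1]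
      nlinarith [ht.2, hr₀]
    have hb := hSch _ hmem
    rw [norm_mul, Complex.norm_real, Real.norm_eq_abs, abs_of_pos ht.1] at hb
    have hb2 : ‖w ((t:ℂ)*z₀)‖ ≤ t := by
      calc ‖w ((t:ℂ)*z₀)‖ ≤ t * ‖z₀‖ / ‖z₀‖ := hb
        _ = t := mul_div_cancel_right₀ t (ne_of_gt hr₀)
    have : Complex.normSq (w ((t:ℂ)*z₀)) = ‖w ((t:ℂ)*z₀)‖^2 := by
      rw [Complex.normSq_eq_norm_sq]
    rw [this]
    exact pow_le_pow_left₀ (norm_nonneg _) hb2 2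
  have hψ1 : Complex.normSq (w (((1:ℝ):ℂ)*z₀)) = 1 := by
    rw [show (((1:ℝ):ℂ)*z₀) = z₀ by simp]; exact hnsq
  have hcre : 1 ≤ c.re := by
    set ψ : ℝ → ℝ := fun t => Complex.normSq (w ((t:ℂ)*z₀)) with hψdef
    set d : ℝ := 2 * ((z₀ • w') * (starRingEnd ℂ) (w z₀)).re with hddef
    have hslope : Tendsto (slope ψ 1) (𝓝[<] (1:ℝ)) (𝓝 d) :=
      ((hasDerivAt_iff_tendsto_slope.mp hψ).mono_left
        (nhdsWithin_mono 1 fun x hx => ne_of_lt hx))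
    have hev : ∀ᶠ t in 𝓝[<] (1:ℝ), 1 + t ≤ slope ψ 1 t := by
      filter_upwards [Ioo_mem_nhdsLT_of_mem (show (1:ℝ) ∈ Set.Ioc 0 1 from ⟨one_pos, le_rfl⟩)]
        with t ht
      have h1 : slope ψ 1 t = (ψ t - ψ 1)/(t - 1) := by
        rw [slope_def_field]
      have hψ1' : ψ 1 = 1 := hψ1
      have hψt : ψ t ≤ t^2 := hψle t ht
      rw [h1, hψ1']
      rw [le_div_iff_of_neg (by linarith [ht.2] : t - 1 < 0)]
      nlinarith
    have h2d : (2:ℝ) ≤ d := by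
      have htend : Tendsto (fun t : ℝ => 1 + t) (𝓝[<] (1:ℝ)) (𝓝 2) := by
        have h5 : Tendsto (fun t : ℝ => 1 + t) (𝓝 (1:ℝ)) (𝓝 (1+1)) :=
          tendsto_const_nhds.add tendsto_id
        norm_num at h5
        exact h5.mono_left nhdsWithin_le_nhds
      exact le_of_tendsto_of_tendsto htend hslope hev
    have : d = 2 * c.re := by
      rw [hddef, hcdef, smul_eq_mul]
    linarith [this ▸ h2d]
  -- tangential direction : c.im = 0
  have hcurve2 : HasDerivAt (fun θ : ℝ => Complex.exp ((θ:ℂ) * Complex.I) * z₀)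
      (Complex.I * z₀) 0 := by
    have h1 : HasDerivAt (fun θ : ℝ => (θ:ℂ) * Complex.I) Complex.I 0 := by
      simpa using (Complex.ofRealCLM.hasDerivAt.mul_const Complex.I)
    have h2 : HasDerivAt Complex.exp (Complex.exp (((0:ℝ):ℂ) * Complex.I)) (((0:ℝ):ℂ) * Complex.I) :=
      Complex.hasDerivAt_exp _
    have h3 := h2.scomp_of_eq (0:ℝ) h1 rfl
    have h4 := h3.mul_const z₀
    simpa [Function.comp] using h4
  have hu0 : HasDerivAt (fun θ : ℝ => w (Complex.exp ((θ:ℂ) * Complex.I) * z₀))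
      ((Complex.I * z₀) • w') 0 := by
    have := hwz₀.scomp_of_eq (0:ℝ) hcurve2 (by simp)
    simpa [Function.comp_def] using this
  have hχ : HasDerivAt (fun θ : ℝ => Complex.normSq (w (Complex.exp ((θ:ℂ) * Complex.I) * z₀)))
      (2 * (((Complex.I * z₀) • w') * (starRingEnd ℂ) (w z₀)).re) 0 := by
    have := hasDerivAt_normSq_comp hu0
    simpa using this
  have hmax : IsLocalMax (fun θ : ℝ => Complex.normSq (w (Complex.exp ((θ:ℂ) * Complex.I) * z₀))) 0 := by
    apply Filter.Eventually.of_forall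
    intro θ
    have hnorm : ‖Complex.exp ((θ:ℂ) * Complex.I) * z₀‖ = ‖z₀‖ := by
      rw [norm_mul, Complex.norm_exp]
      simp
    have := claim3 _ (le_of_eq hnorm)
    have h2 : Complex.normSq (w (Complex.exp ((θ:ℂ) * Complex.I) * z₀)) ≤ 1 := by
      rw [Complex.normSq_eq_norm_sq]
      nlinarith [norm_nonneg (w (Complex.exp ((θ:ℂ) * Complex.I) * z₀))]
    simp only
    rw [show Complex.exp (((0:ℝ):ℂ) * Complex.I) * z₀ = z₀ by simp]
    rw [hnsq]
    exact h2
  have hder0 := hmax.hasDerivAt_eq_zero hχ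
  have hcim : c.im = 0 := by
    have h1 : ((Complex.I * z₀) • w') * (starRingEnd ℂ) (w z₀) = Complex.I * c := by
      rw [hcdef, smul_eq_mul]; ring
    rw [h1] at hder0
    have : (Complex.I * c).re = -c.im := by simp [Complex.mul_re]
    rw [this] at hder0
    linarith
  refine ⟨z₀, hz₀U, hz₀ne, habs1, c.re, hcre, ?_⟩
  have hc : c = ((c.re : ℝ) : ℂ) := by
    rw [← Complex.re_add_im c, hcim]; simp
  have hmc : (starRingEnd ℂ) (w z₀) * w z₀ = 1 := by
    rw [mul_comm, Complex.mul_conj, hnsq]; norm_num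
  calc z₀ * w' = z₀ * w' * ((starRingEnd ℂ) (w z₀) * w z₀) := by rw [hmc, mul_one]
    _ = c * w z₀ := by rw [hcdef]; ring
    _ = ((c.re : ℝ) : ℂ) * w z₀ := by rw [← hc]
lemma re_one_div_gt_half {s : ℂ} (h : ‖s‖ < 1) : 1/2 < (1/(1+s)).re := by
  have hns : Complex.normSq s < 1 := by
    rw [Complex.normSq_eq_norm_sq]
    nlinarith [norm_nonneg s]
  have hne : 1 + s ≠ 0 := by
    intro h0
    have : s = -1 := by linear_combination h0
    rw [this] at h; simp at h
  have hN : 0 < Complex.normSq (1+s) := Complex.normSq_pos.mpr hne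
  rw [show (1:ℂ)/(1+s) = (1+s)⁻¹ from one_div _, Complex.inv_re, lt_div_iff₀ hN]
  rw [Complex.normSq_apply] at hns hN ⊢
  simp only [Complex.add_re, Complex.add_im, Complex.one_re, Complex.one_im]
  nlinarith

lemma re_final_le_zero {w₀ : ℂ} (h1 : Complex.normSq w₀ = 1) (hne : 1 + w₀ ≠ 0) {k : ℝ}
    (hk : 1 ≤ k) : (((1:ℂ) - (k:ℂ)*w₀)/(1+w₀)).re ≤ 0 := by
  have hN : 0 < Complex.normSq (1+w₀) := Complex.normSq_pos.mpr hne
  rw [Complex.div_re, ← add_div]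
  apply div_nonpos_of_nonpos_of_nonneg _ (le_of_lt hN)
  rw [Complex.normSq_apply] at h1
  simp only [Complex.sub_re, Complex.sub_im, Complex.one_re, Complex.one_im, Complex.mul_re,
    Complex.mul_im, Complex.ofReal_re, Complex.ofReal_im, Complex.add_re, Complex.add_im]
  nlinarith [sq_nonneg (w₀.re + 1), sq_nonneg w₀.im]

lemma deriv_ne_zero (f : ℂ → ℂ) (hf : AnalyticOnNhd ℂ f (ball (0:ℂ) 1)) (h1 : deriv f 0 = 1)
    (hconv : ∀ z ∈ ball (0:ℂ) 1, 0 < (1 + z * iteratedDeriv 2 f z / deriv f z).re) :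
    ∀ z ∈ ball (0:ℂ) 1, deriv f z ≠ 0 := by
  intro z₀ hz₀ hder
  have hz₀ne : z₀ ≠ 0 := by rintro rfl; rw [h1] at hder; exact one_ne_zero hder
  have hf' : AnalyticOnNhd ℂ (deriv f) (ball (0:ℂ) 1) := hf.deriv_of_isOpen isOpen_ball
  have hA : AnalyticAt ℂ (deriv f) z₀ := hf' z₀ hz₀
  have hnot : ¬ (∀ᶠ z in 𝓝 z₀, deriv f z = 0) := by
    intro hev
    have heq : EqOn (deriv f) 0 (ball (0:ℂ) 1) :=
      hf'.eqOn_zero_of_preconnected_of_eventuallyEq_zero (convex_ball _ _).isPreconnected hz₀ hev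
    have := heq (mem_ball_self one_pos)
    rw [h1] at this
    exact one_ne_zero this
  obtain ⟨n, hn⟩ := WithTop.ne_top_iff_exists.mp (fun h => hnot (analyticOrderAt_eq_top.mp h))
  obtain ⟨g, hg, hg0, hfe⟩ := (hA.analyticOrderAt_eq_natCast).mp hn.symm
  have hn1 : 1 ≤ n := by
    rcases Nat.eq_zero_or_pos n with h | h
    · exfalso
      have := hfe.self_of_nhds
      rw [h] at this
      simp at this
      rw [hder] at this
      exact hg0 this.symm
    · exact h
  obtain ⟨m, rfl⟩ : ∃ m, n = m + 1 := ⟨n - 1, (Nat.succ_pred_eq_of_pos hn1).symm⟩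
  -- continuity of deriv g at z₀
  have hgball : ∀ᶠ ζ in 𝓝 z₀, AnalyticAt ℂ g ζ := hg.eventually_analyticAt
  obtain ⟨ε, hεpos, hεball⟩ := Metric.eventually_nhds_iff_ball.mp hgball
  have hganOn : AnalyticOnNhd ℂ g (ball z₀ ε) := fun ζ hζ => hεball ζ hζ
  have hg' : AnalyticOnNhd ℂ (deriv g) (ball z₀ ε) := hganOn.deriv_of_isOpen isOpen_ball
  have hcont : ContinuousAt (fun z => z * deriv g z / g z) z₀ := by
    apply ContinuousAt.div
    · exact continuousAt_id.mul ((hg' z₀ (mem_ball_self hεpos)).continuousAt)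
    · exact hg.continuousAt
    · exact hg0
  set C : ℝ := ‖z₀ * deriv g z₀ / g z₀‖ + 1 with hCdef
  have hC0 : 0 < C := by positivity
  have hCev : ∀ᶠ z in 𝓝 z₀, ‖z * deriv g z / g z‖ < C := by
    have htend : Tendsto (fun z => ‖z * deriv g z / g z‖) (𝓝 z₀)
        (𝓝 (‖z₀ * deriv g z₀ / g z₀‖)) :=
      (continuous_norm.continuousAt.comp hcont)
    exact htend.eventually_lt_const (lt_add_one _)
  have hgev : ∀ᶠ z in 𝓝 z₀, g z ≠ 0 := hg.continuousAt.eventually_ne hg0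
  have hall := hfe.and (hgev.and (hCev.and hgball))
  obtain ⟨δ, hδpos, hδ⟩ := Metric.eventually_nhds_iff_ball.mp hall
  -- choose t
  set N : ℝ := ((m+1 : ℕ) : ℝ)
  have hN1 : 1 ≤ N := by simp [N]
  set t : ℝ := min (δ / (2*‖z₀‖)) (min (1/2) (1/(1 + N + C))) with htdef
  have hz₀n : 0 < ‖z₀‖ := norm_pos_iff.mpr hz₀ne
  have htpos : 0 < t := by
    apply lt_min
    · apply div_pos hδpos (by positivity)
    · apply lt_min
      · norm_num
      · positivity
  have ht2 : t ≤ 1/2 := le_trans (min_le_right _ _) (min_le_left _ _)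
  have ht3 : t ≤ 1/(1 + N + C) := le_trans (min_le_right _ _) (min_le_right _ _)
  have ht1 : t ≤ δ / (2*‖z₀‖) := min_le_left _ _
  set z : ℂ := ((1 - t : ℝ) : ℂ) * z₀ with hzdef
  have hzsub : z - z₀ = -(t:ℂ) * z₀ := by rw [hzdef]; push_cast; ring
  have hzball : z ∈ ball z₀ δ := by
    rw [mem_ball, dist_eq_norm, hzsub]
    rw [norm_mul, norm_neg, Complex.norm_real, Real.norm_eq_abs, _root_.abs_of_pos htpos]
    have h2 : t * ‖z₀‖ ≤ δ/2 := by
      have h3 := mul_le_mul_of_nonneg_right ht1 (le_of_lt hz₀n)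
      rwa [div_mul_eq_mul_div, mul_comm (2:ℝ) ‖z₀‖, ← div_div, mul_div_assoc,
        div_self (ne_of_gt hz₀n), mul_one] at h3
      
    linarith
  have hzU : z ∈ ball (0:ℂ) 1 := by
    rw [mem_ball_zero_iff, hzdef, norm_mul, Complex.norm_real, Real.norm_eq_abs,
      _root_.abs_of_pos (by linarith : (0:ℝ) < 1 - t)]
    have := mem_ball_zero_iff.mp hz₀
    nlinarith [norm_pos_iff.mpr hz₀ne]
  obtain ⟨hfz, hgz, hCz, hgaz⟩ := hδ z hzball
  have hzz₀ : z ≠ z₀ := by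
    intro h
    rw [h, sub_self] at hzsub
    have h2 : (t:ℂ) * z₀ = 0 := by linear_combination hzsub
    exact (mul_ne_zero (Complex.ofReal_ne_zero.mpr (ne_of_gt htpos)) hz₀ne) h2
  have hfz' : deriv f z = (z - z₀)^(m+1) * g z := by rw [hfz]; simp [smul_eq_mul]
  have hne' : deriv f z ≠ 0 := by
    rw [hfz']
    exact mul_ne_zero (pow_ne_zero _ (sub_ne_zero.mpr hzz₀)) hgz
  have hd2 : iteratedDeriv 2 f z = deriv (deriv f) z := by
    rw [iteratedDeriv_succ, iteratedDeriv_one]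
  have hevz : deriv f =ᶠ[𝓝 z] fun ζ => (ζ - z₀)^(m+1) * g ζ := by
    filter_upwards [isOpen_ball.mem_nhds hzball] with ζ hζ
    have := (hδ ζ hζ).1
    simpa [smul_eq_mul] using this
  have hDg : HasDerivAt g (deriv g z) z := hgaz.differentiableAt.hasDerivAt
  have hDrhs : HasDerivAt (fun ζ => (ζ - z₀)^(m+1) * g ζ)
      (((m+1:ℕ):ℂ)*(z-z₀)^m * g z + (z-z₀)^(m+1) * deriv g z) z := by
    have h1 : HasDerivAt (fun ζ : ℂ => (ζ - z₀)^(m+1)) (((m+1:ℕ):ℂ)*(z-z₀)^m) z := by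
      have := (hasDerivAt_pow (m+1) (z - z₀)).comp z ((hasDerivAt_id z).sub_const z₀)
      simpa [Function.comp_def] using this
    exact h1.mul hDg
  have hD2val : deriv (deriv f) z = ((m+1:ℕ):ℂ)*(z-z₀)^m * g z + (z-z₀)^(m+1) * deriv g z := by
    rw [hevz.deriv_eq]; exact hDrhs.deriv
  have hzval : z / (z - z₀) = ((1 - 1/t : ℝ) : ℂ) := by
    rw [hzsub, hzdef]
    have htne : (t:ℂ) ≠ 0 := by exact_mod_cast ne_of_gt htpos
    push_cast
    field_simp
    ring
  have hexpr : 1 + z * iteratedDeriv 2 f z / deriv f z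
      = 1 + ((m+1:ℕ):ℂ) * ((1 - 1/t:ℝ):ℂ) + z * deriv g z / g z := by
    rw [hd2, hD2val, hfz', ← hzval]
    have hsub : z - z₀ ≠ 0 := sub_ne_zero.mpr hzz₀
    field_simp
    rw [pow_succ]
    ring
  have hre : (1 + z * iteratedDeriv 2 f z / deriv f z).re ≤ 1 + N * (1 - 1/t) + C := by
    rw [hexpr]
    have h1 : (1 + ((m+1:ℕ):ℂ) * ((1 - 1/t:ℝ):ℂ) + z * deriv g z / g z).re
        = 1 + N * (1 - 1/t) + (z * deriv g z / g z).re := by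
      simp [Complex.add_re, Complex.mul_re, Complex.ofReal_re, Complex.ofReal_im, N]
    rw [h1]
    have h2 : (z * deriv g z / g z).re ≤ C := le_trans (Complex.re_le_norm _) (le_of_lt hCz)
    linarith
  have hcontr := hconv z hzU
  -- arithmetic contradiction
  have harith : 1 + N * (1 - 1/t) + C ≤ 0 := by
    have hinv : 1 + N + C ≤ 1/t := by
      rw [← one_div_one_div (1 + N + C)]
      apply one_div_le_one_div_of_le htpos ht3
    have hNt : N * (1+N+C) ≤ N * (1/t) := by
      apply mul_le_mul_of_nonneg_left hinv (by linarith)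
    have key : 1 + N + C ≤ N * (1/t) := by
      refine le_trans ?_ hNt
      nlinarith [mul_nonneg (by linarith : (0:ℝ) ≤ N - 1)
        (by positivity : (0:ℝ) ≤ 1 + N + C)]
    have expand : N * (1 - 1/t) = N - N * (1/t) := by ring
    rw [expand]
    linarith
  linarith

lemma w_analytic (f : ℂ → ℂ) (hf : AnalyticOnNhd ℂ f (ball (0:ℂ) 1)) (h0 : f 0 = 0)
    (h1 : deriv f 0 = 1) (hne : ∀ z ∈ ball (0:ℂ) 1, deriv f z ≠ 0) :
    ∀ z ∈ ball (0:ℂ) 1,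
      AnalyticAt ℂ (fun z => if z = 0 then 0 else f z / (z * deriv f z) - 1) z := by
  have hf' : AnalyticOnNhd ℂ (deriv f) (ball (0:ℂ) 1) := hf.deriv_of_isOpen isOpen_ball
  have h0U : (0:ℂ) ∈ ball (0:ℂ) 1 := mem_ball_self one_pos
  intro z hz
  by_cases hz0 : z = 0
  · subst hz0
    have hA : AnalyticAt ℂ f 0 := hf 0 h0U
    have hnot : ¬ (∀ᶠ ζ in 𝓝 (0:ℂ), f ζ = 0) := by
      intro hev
      have hev' : f =ᶠ[𝓝 (0:ℂ)] (fun _ => (0:ℂ)) := hev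
      have : deriv f 0 = deriv (fun _ : ℂ => (0:ℂ)) 0 := hev'.deriv_eq
      rw [deriv_const] at this
      rw [h1] at this
      exact one_ne_zero this
    obtain ⟨n, hn⟩ := WithTop.ne_top_iff_exists.mp (fun h => hnot (analyticOrderAt_eq_top.mp h))
    obtain ⟨G, hG, hG0, hfe⟩ := (hA.analyticOrderAt_eq_natCast).mp hn.symm
    simp only [sub_zero, smul_eq_mul] at hfe
    have hfe' : f =ᶠ[𝓝 (0:ℂ)] (fun ζ => ζ ^ n * G ζ) := hfe
    have hDG : HasDerivAt G (deriv G 0) 0 := hG.differentiableAt.hasDerivAt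
    match n with
    | 0 =>
      exfalso
      have := hfe.self_of_nhds
      simp at this
      rw [h0] at this
      exact hG0 this.symm
    | Nat.succ (Nat.succ m) =>
      exfalso
      have hde : deriv f 0 = deriv (fun ζ : ℂ => ζ^(m+2) * G ζ) 0 := hfe'.deriv_eq
      have hD : HasDerivAt (fun ζ : ℂ => ζ^(m+2) * G ζ)
          (((m+2:ℕ):ℂ)*(0:ℂ)^(m+1) * G 0 + (0:ℂ)^(m+2) * deriv G 0) 0 :=
        (hasDerivAt_pow (m+2) (0:ℂ)).mul hDG
      rw [hde, hD.deriv] at h1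
      simp at h1
    | 1 =>
      have hde : deriv f 0 = deriv (fun ζ : ℂ => ζ^1 * G ζ) 0 := hfe'.deriv_eq
      have hD : HasDerivAt (fun ζ : ℂ => ζ^1 * G ζ) (G 0) 0 := by
        have := (hasDerivAt_pow 1 (0:ℂ)).mul hDG
        simpa [Pi.mul_def] using this
      have hG1 : G 0 = 1 := by rw [← h1, hde, hD.deriv]
      have hfne' : ∀ᶠ ζ in 𝓝 (0:ℂ), deriv f ζ ≠ 0 :=
        (hf' 0 h0U).continuousAt.eventually_ne (by rw [h1]; exact one_ne_zero)
      have hweq : (fun z => if z = 0 then 0 else f z / (z * deriv f z) - 1)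
          =ᶠ[𝓝 (0:ℂ)] fun ζ => G ζ / deriv f ζ - 1 := by
        filter_upwards [hfe, hfne'] with ζ hζ1 hζ2
        by_cases hζ : ζ = 0
        · subst hζ
          rw [if_pos rfl, hG1, h1]
          norm_num
        · rw [if_neg hζ]
          simp only [pow_one] at hζ1
          rw [hζ1, mul_div_mul_left _ _ hζ]
      exact ((hG.div (hf' 0 h0U) (by rw [h1]; exact one_ne_zero)).sub
        analyticAt_const).congr hweq.symm
  · have hA : AnalyticAt ℂ (fun ζ => f ζ / (ζ * deriv f ζ) - 1) z :=
      ((hf z hz).div ((analyticAt_id).mul (hf' z hz)) (mul_ne_zero hz0 (hne z hz))).sub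
        analyticAt_const
    apply hA.congr
    filter_upwards [isOpen_compl_singleton.mem_nhds hz0] with ζ hζ
    simp only [Set.mem_compl_iff, Set.mem_singleton_iff] at hζ
    rw [if_neg hζ]
theorem marx_strohhacker (f : ℂ → ℂ) (hf : AnalyticOnNhd ℂ f (ball (0:ℂ) 1))
    (h0 : f 0 = 0) (h1 : deriv f 0 = 1)
    (hconv : ∀ z ∈ ball (0:ℂ) 1, 0 < (1 + z * iteratedDeriv 2 f z / deriv f z).re) :
    ∀ z ∈ ball (0:ℂ) 1, z ≠ 0 → 1/2 < (z * deriv f z / f z).re := by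
  have hf' : AnalyticOnNhd ℂ (deriv f) (ball (0:ℂ) 1) := hf.deriv_of_isOpen isOpen_ball
  have hne : ∀ z ∈ ball (0:ℂ) 1, deriv f z ≠ 0 := deriv_ne_zero f hf h1 hconv
  set w : ℂ → ℂ := fun z => if z = 0 then 0 else f z / (z * deriv f z) - 1 with hwdef
  have hw0 : w 0 = 0 := if_pos rfl
  have hwan : ∀ z ∈ ball (0:ℂ) 1, AnalyticAt ℂ w z := w_analytic f hf h0 h1 hne
  have hkey : ∀ z ∈ ball (0:ℂ) 1, ‖w z‖ < 1 := by
    by_contra hcon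
    push_neg at hcon
    obtain ⟨z₁, hz₁U, hz₁⟩ := hcon
    obtain ⟨z₀, hz₀U, hz₀ne, habs, k, hk, hjack⟩ := jack hwan hw0 hz₁U hz₁
    have hf'z₀ : deriv f z₀ ≠ 0 := hne z₀ hz₀U
    have hnsw : Complex.normSq (w z₀) = 1 := by
      rw [Complex.normSq_eq_norm_sq, habs]; norm_num
    -- eventual identity f z = z * f' z * (1 + w z)
    have hev : f =ᶠ[𝓝 z₀] fun z => z * deriv f z * (1 + w z) := by
      have hUo : IsOpen (ball (0:ℂ) 1 ∩ {(0:ℂ)}ᶜ) := isOpen_ball.inter isOpen_compl_singleton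
      have hmem : z₀ ∈ ball (0:ℂ) 1 ∩ {(0:ℂ)}ᶜ := ⟨hz₀U, hz₀ne⟩
      filter_upwards [hUo.mem_nhds hmem] with z hz
      have hzne : z ≠ 0 := hz.2
      have ha : z * deriv f z ≠ 0 := mul_ne_zero hzne (hne z hz.1)
      have hwz : w z = f z / (z * deriv f z) - 1 := if_neg hzne
      rw [hwz]
      field_simp [hne z hz.1]
      ring
    -- differentiate
    have hDf' : HasDerivAt (deriv f) (deriv (deriv f) z₀) z₀ :=
      ((hf' z₀ hz₀U).differentiableAt).hasDerivAt
    have hDw : HasDerivAt w (deriv w z₀) z₀ := ((hwan z₀ hz₀U).differentiableAt).hasDerivAt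
    have hR : HasDerivAt (fun z => z * deriv f z * (1 + w z))
        ((1 * deriv f z₀ + z₀ * deriv (deriv f) z₀) * (1 + w z₀)
          + z₀ * deriv f z₀ * (0 + deriv w z₀)) z₀ :=
      ((hasDerivAt_id z₀).mul hDf').mul ((hasDerivAt_const z₀ 1).add hDw)
    have hfd : HasDerivAt f ((1 * deriv f z₀ + z₀ * deriv (deriv f) z₀) * (1 + w z₀)
          + z₀ * deriv f z₀ * (0 + deriv w z₀)) z₀ := hR.congr_of_eventuallyEq hev
    have hE := hfd.deriv
    -- hE : deriv f z₀ = ...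
    have hit : iteratedDeriv 2 f z₀ = deriv (deriv f) z₀ := by
      rw [iteratedDeriv_succ, iteratedDeriv_one]
    by_cases hcase : 1 + w z₀ = 0
    · rw [hcase, mul_zero, zero_add] at hE
      have h2 : z₀ * deriv w z₀ = 1 := by
        apply mul_left_cancel₀ hf'z₀
        linear_combination -hE
      rw [hjack] at h2
      have hw₀ : w z₀ = -1 := by linear_combination hcase
      rw [hw₀] at h2
      have : ((-k : ℝ) : ℂ) = 1 := by push_cast; linear_combination h2
      have hre : (-k : ℝ) = 1 := by exact_mod_cast this
      linarith
    · -- main case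
      have hMain : (1 + z₀ * deriv (deriv f) z₀ / deriv f z₀) * (1 + w z₀)
          = 1 - (k:ℂ) * w z₀ := by
        field_simp
        linear_combination (-1 : ℂ) * hE - deriv f z₀ * hjack
      have hAval : 1 + z₀ * deriv (deriv f) z₀ / deriv f z₀
          = (1 - (k:ℂ) * w z₀) / (1 + w z₀) := by
        rw [eq_div_iff hcase]
        exact hMain
      have hle : (1 + z₀ * iteratedDeriv 2 f z₀ / deriv f z₀).re ≤ 0 := by
        rw [hit, hAval]
        exact re_final_le_zero hnsw hcase hk
      linarith [hconv z₀ hz₀U]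
  -- conclusion
  intro z hzU hzne
  have hw := hkey z hzU
  have ha : z * deriv f z ≠ 0 := mul_ne_zero hzne (hne z hzU)
  have hwz : w z = f z / (z * deriv f z) - 1 := if_neg hzne
  have h1w : 1 + w z = f z / (z * deriv f z) := by rw [hwz]; ring
  have h1wne : 1 + w z ≠ 0 := by
    intro h
    have : w z = -1 := by linear_combination h
    rw [this] at hw
    simp at hw
  have hfz : f z = (z * deriv f z) * (1 + w z) := by
    rw [h1w]
    field_simp [hne z hzU]
  have hquot : z * deriv f z / f z = 1 / (1 + w z) := by
    rw [hfz, div_mul_eq_div_div_swap, div_right_comm, div_self ha]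
  rw [hquot]
  exact re_one_div_gt_half hw

lemma ex_hasDerivAt (z : ℂ) : HasDerivAt (fun z : ℂ => z - z ^ 2 / 3) (1 - 2 * z / 3) z := by
  have h1 : HasDerivAt (fun z : ℂ => z ^ 2) (2 * z) z := by
    simpa using hasDerivAt_pow 2 z
  simpa [Pi.sub_def] using (hasDerivAt_id z).sub (h1.div_const 3)

lemma ex_deriv : deriv (fun z : ℂ => z - z ^ 2 / 3) = fun z => 1 - 2 * z / 3 :=
  funext fun z => (ex_hasDerivAt z).deriv

lemma ex_deriv2 (z : ℂ) : iteratedDeriv 2 (fun z : ℂ => z - z ^ 2 / 3) z = -2/3 := by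
  rw [iteratedDeriv_succ, iteratedDeriv_one, ex_deriv]
  have h : HasDerivAt (fun z : ℂ => 1 - 2 * z / 3) (-2/3) z := by
    have h1 : HasDerivAt (fun z : ℂ => 2 * z) 2 z := by
      simpa using (hasDerivAt_id z).const_mul (2:ℂ)
    have := (hasDerivAt_const z (1:ℂ)).sub (h1.div_const 3)
    rw [show (-2/3 : ℂ) = 0 - 2/3 by ring]
    exact this
  exact h.deriv

lemma ex_starlike : ∀ z ∈ ball (0:ℂ) 1, z ≠ 0 →
    1/2 < (z * deriv (fun z : ℂ => z - z ^ 2 / 3) z / (z - z ^ 2 / 3)).re := by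
  intro z hz hzne
  have hznorm : ‖z‖ < 1 := mem_ball_zero_iff.mp hz
  have h3z : (3 : ℂ) - z ≠ 0 := by
    intro h
    have : z = 3 := by linear_combination -h
    rw [this] at hznorm
    norm_num at hznorm
  have hquot : z * deriv (fun z : ℂ => z - z ^ 2 / 3) z / (z - z ^ 2 / 3)
      = (3 - 2*z) / (3 - z) := by
    rw [ex_deriv]
    simp only
    rw [div_eq_div_iff _ h3z]
    · ring
    · intro h
      have h2 : z * (3 - z) = 0 := by linear_combination 3 * h
      rcases mul_eq_zero.mp h2 with h' | h'
      · exact hzne h'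
      · exact h3z (by linear_combination h')
  rw [hquot]
  have hN : 0 < Complex.normSq (3 - z) := Complex.normSq_pos.mpr h3z
  rw [Complex.div_re, ← add_div, lt_div_iff₀ hN]
  have hns : Complex.normSq z < 1 := by
    rw [Complex.normSq_eq_norm_sq]
    nlinarith [norm_nonneg z]
  rw [Complex.normSq_apply] at hns hN ⊢
  simp only [Complex.sub_re, Complex.sub_im, Complex.mul_re, Complex.mul_im,
    Complex.ofReal_re, Complex.ofReal_im]
  norm_num
  nlinarith [sq_nonneg (z.re - 1), sq_nonneg z.im, hns]

lemma ex_not_convex : ¬ (∀ z ∈ ball (0:ℂ) 1,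
    0 < (1 + z * iteratedDeriv 2 (fun z : ℂ => z - z ^ 2 / 3) z /
      deriv (fun z : ℂ => z - z ^ 2 / 3) z).re) := by
  intro h
  have hmem : (9/10 : ℂ) ∈ ball (0:ℂ) 1 := by
    rw [mem_ball_zero_iff]
    rw [show (9/10 : ℂ) = ((9/10 : ℝ) : ℂ) by norm_num]
    rw [Complex.norm_real, Real.norm_eq_abs, _root_.abs_of_nonneg (by norm_num : (0:ℝ) ≤ 9/10)]
    norm_num
  have := h (9/10) hmem
  rw [ex_deriv2, ex_deriv] at this
  simp only at this
  have hval : (1 + (9/10 : ℂ) * (-2/3) / (1 - 2 * (9/10) / 3)) = (-(1/2) : ℝ) := by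
    push_cast
    norm_num
  rw [hval] at this
  rw [Complex.ofReal_re] at this
  norm_num at this

end MS

theorem stmt15 :
    (∀ f : ℂ → ℂ, AnalyticOn ℂ f unitDisk → Normalized f →
      (∀ z ∈ unitDisk, 0 < (1 + z * iteratedDeriv 2 f z / deriv f z).re) →
      StarlikeOfOrder (1 / 2) f) ∧
    StarlikeOfOrder (1 / 2) (fun z : ℂ => z - z ^ 2 / 3) ∧
    ¬ (∀ z ∈ unitDisk,
        0 < (1 + z * iteratedDeriv 2 (fun z : ℂ => z - z ^ 2 / 3) z /
          deriv (fun z : ℂ => z - z ^ 2 / 3) z).re) := by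
  refine ⟨?_, ?_, ?_⟩
  · intro f hf hn hconv
    intro z hzU hzne
    have hf' : AnalyticOnNhd ℂ f (Metric.ball 0 1) :=
      (Metric.isOpen_ball.analyticOn_iff_analyticOnNhd).mp hf
    exact MS.marx_strohhacker f hf' hn.1 hn.2 hconv z hzU hzne
  · intro z hz hzne
    exact MS.ex_starlike z hz hzne
  · exact MS.ex_not_convex
end
end
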